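/- arXiv:1001.4987 — 2 statements merged into one kernel-verified Lean document; each statement's English description precedes it below -/
import Mathlib

section
/- Let R ⊆ {0,1}^r be a Boolean relation. If R_= ≤ppp R, or R_≠ ≤ppp R, or R_→ ≤ppp R, then R 3-simulates equality. -/
/-- A Boolean relation of arity `r`: a set of bit-tuples of length `r`. -/
abbrev BoolRel (r : ℕ) := Set (Fin r → Bool)

/-- The unary constant relation `{0}`. -/
def Rzero : BoolRel 1 := {a | a 0 = false}

/-- The unary constant relation `{1}`. -/
def Rone : BoolRel 1 := {a | a 0 = true}

/-- A constraint over a variable set `V`: a Boolean relation together with a scope. -/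
structure Constraint (V : Type) where
  arity : ℕ
  rel : BoolRel arity
  scope : Fin arity → V

/-- An assignment satisfies a constraint if the scoped tuple lies in the relation. -/
def Constraint.sat {V : Type} (c : Constraint V) (σ : V → Bool) : Prop :=
  (fun i => σ (c.scope i)) ∈ c.rel

/-- A CSP instance: a collection of constraints over a variable set `V`. -/
structure CSPInstance (V : Type) where
  constraints : List (Constraint V)

/-- An assignment satisfies an instance if it satisfies every constraint. -/
def CSPInstance.sat {V : Type} (I : CSPInstance V) (σ : V → Bool) : Prop :=
  ∀ c ∈ I.constraints, c.sat σ

/-- An instance is over the constraint language `Γ` if every constraint uses a relation of `Γ`. -/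
def CSPInstance.over {V : Type} (I : CSPInstance V) (Γ : Set (Σ r, BoolRel r)) : Prop :=
  ∀ c ∈ I.constraints, (⟨c.arity, c.rel⟩ : Σ r, BoolRel r) ∈ Γ

/-- The degree of a variable: the number of occurrences among the scopes of the constraints. -/
def varDegree {V : Type} [DecidableEq V] (I : CSPInstance V) (v : V) : ℕ :=
  (I.constraints.map fun c => (Finset.univ.filter fun i => c.scope i = v).card).sum

/-- The language `{R_zero, R_one}` of pins. -/
def pinLang : Set (Σ r, BoolRel r) := {⟨1, Rzero⟩, ⟨1, Rone⟩}

/-- `Γ` `d`-simulates the `k`-ary equality relation. -/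
def simulatesEqK (Γ : Set (Σ r, BoolRel r)) (d k : ℕ) : Prop :=
  ∃ (ℓ : ℕ), k ≤ ℓ ∧ ∃ I : CSPInstance (Fin ℓ),
    I.over (Γ ∪ pinLang) ∧
    (∀ v : Fin ℓ, varDegree I v ≤ d) ∧
    (∀ v : Fin ℓ, (v : ℕ) < k → varDegree I v ≤ d - 1) ∧
    ∃ m : ℕ, 1 ≤ m ∧
      Nat.card {σ : Fin ℓ → Bool | I.sat σ ∧ ∀ v : Fin ℓ, (v : ℕ) < k → σ v = false} = m ∧
      Nat.card {σ : Fin ℓ → Bool | I.sat σ ∧ ∀ v : Fin ℓ, (v : ℕ) < k → σ v = true} = m ∧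
      (∀ σ : Fin ℓ → Bool, I.sat σ →
        (∀ v : Fin ℓ, (v : ℕ) < k → σ v = false) ∨ (∀ v : Fin ℓ, (v : ℕ) < k → σ v = true))

/-- `Γ` `d`-simulates equality: it `d`-simulates `Eq_k` for every `k ≥ 2`. -/
def simulatesEq (Γ : Set (Σ r, BoolRel r)) (d : ℕ) : Prop :=
  ∀ k : ℕ, 2 ≤ k → simulatesEqK Γ d k

/-- A single relation `d`-simulates equality if the language `{R}` does. -/
def relSimulatesEq {r : ℕ} (R : BoolRel r) (d : ℕ) : Prop :=
  simulatesEq {⟨r, R⟩} d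

/-- OR-conj relations: definable by a conjunction of pins and ORs (of any arity ≥ 1). -/
def ORConj {r : ℕ} (R : BoolRel r) : Prop :=
  ∃ (P : Set (Fin r × Bool)) (Cl : Set (Set (Fin r))),
    (∀ C ∈ Cl, C.Nonempty) ∧
    ∀ a : Fin r → Bool, a ∈ R ↔
      ((∀ p ∈ P, a p.1 = p.2) ∧ (∀ C ∈ Cl, ∃ i ∈ C, a i = true))

/-- NAND-conj relations: definable by a conjunction of pins and NANDs (of any arity ≥ 1). -/
def NANDConj {r : ℕ} (R : BoolRel r) : Prop :=
  ∃ (P : Set (Fin r × Bool)) (Cl : Set (Set (Fin r))),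
    (∀ C ∈ Cl, C.Nonempty) ∧
    ∀ a : Fin r → Bool, a ∈ R ↔
      ((∀ p ∈ P, a p.1 = p.2) ∧ (∀ C ∈ Cl, ∃ i ∈ C, a i = false))

/-- One step of ppp-definability: permutation of columns, pinning, or projection. -/
inductive pppStep : (Σ r, BoolRel r) → (Σ r, BoolRel r) → Prop
  | perm {r : ℕ} (R : BoolRel r) (π : Equiv.Perm (Fin r)) :
      pppStep ⟨r, R⟩ ⟨r, {a | (fun i => a (π i)) ∈ R}⟩
  | pin {r : ℕ} (R : BoolRel r) (i : Fin r) (c : Bool) :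
      pppStep ⟨r, R⟩ ⟨r, {a | a ∈ R ∧ a i = c}⟩
  | proj {r : ℕ} (R : BoolRel (r + 1)) (i : Fin (r + 1)) :
      pppStep ⟨r + 1, R⟩ ⟨r, {a | ∃ b ∈ R, a = fun j => b (i.succAbove j)}⟩

/-- `R ≤ppp R'`: `R` is obtained from `R'` by a sequence of ppp operations. -/
def pppLE {r r' : ℕ} (R : BoolRel r) (R' : BoolRel r') : Prop :=
  Relation.ReflTransGen pppStep ⟨r', R'⟩ ⟨r, R⟩

def Req : BoolRel 2 := {a | a 0 = a 1}
def Rneq : BoolRel 2 := {a | a 0 ≠ a 1}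
def Rimp : BoolRel 2 := {a | a 0 = true → a 1 = true}
def ROR : BoolRel 2 := {a | a 0 = true ∨ a 1 = true}
def RNAND : BoolRel 2 := {a | a 0 = false ∨ a 1 = false}
def ORk (k : ℕ) : BoolRel k := {a | ∃ i, a i = true}
def NANDk (k : ℕ) : BoolRel k := {a | ∃ i, a i = false}

/-- `R₀ + R₁ = {0a : a ∈ R₀} ∪ {1a : a ∈ R₁}`. -/
def relSum {r : ℕ} (R0 R1 : BoolRel r) : BoolRel (r + 1) :=
  {a | (a 0 = false ∧ (fun i => a i.succ) ∈ R0) ∨ (a 0 = true ∧ (fun i => a i.succ) ∈ R1)}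

/-- Column `i` of `R` is constant. -/
def constCol {r : ℕ} (R : BoolRel r) (i : Fin r) : Prop :=
  ∀ a ∈ R, ∀ b ∈ R, a i = b i


/-- Affine relations: solution sets of systems of linear equations over GF(2). -/
def AffineRel {r : ℕ} (R : BoolRel r) : Prop :=
  ∃ E : Set (Finset (Fin r) × Bool),
    ∀ a : Fin r → Bool, a ∈ R ↔
      ∀ e ∈ E, (∑ i ∈ e.1, (if a i then (1 : ZMod 2) else 0)) = (if e.2 then (1 : ZMod 2) else 0)

/-- IM-conj relations: definable by a conjunction of pins and binary implications. -/
def IMConj {r : ℕ} (R : BoolRel r) : Prop :=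
  ∃ (P : Set (Fin r × Bool)) (Imp : Set (Fin r × Fin r)),
    ∀ a : Fin r → Bool, a ∈ R ↔
      ((∀ p ∈ P, a p.1 = p.2) ∧ (∀ q ∈ Imp, a q.1 = true → a q.2 = true))

/-- Pointwise order on bit-tuples. -/
def leTuple {r : ℕ} (a b : Fin r → Bool) : Prop := ∀ i, a i = true → b i = true

/-- A relation is monotone if it is upward closed. -/
def MonotoneRel {r : ℕ} (R : BoolRel r) : Prop := ∀ a ∈ R, ∀ b, leTuple a b → b ∈ R

/-- A relation is antitone if it is downward closed. -/
def AntitoneRel {r : ℕ} (R : BoolRel r) : Prop := ∀ a ∈ R, ∀ b, leTuple b a → b ∈ R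

/-- Pseudo-monotone: the restriction to non-constant columns is monotone. -/
def PseudoMonotone {r : ℕ} (R : BoolRel r) : Prop :=
  ∀ a ∈ R, ∀ b : Fin r → Bool,
    (∀ i, constCol R i → b i = a i) →
    (∀ i, ¬ constCol R i → a i = true → b i = true) → b ∈ R

/-- Pseudo-antitone: the restriction to non-constant columns is antitone. -/
def PseudoAntitone {r : ℕ} (R : BoolRel r) : Prop :=
  ∀ a ∈ R, ∀ b : Fin r → Bool,
    (∀ i, constCol R i → b i = a i) →
    (∀ i, ¬ constCol R i → b i = true → a i = true) → b ∈ R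

/-- Bit-wise complement of a relation. -/
def bwcomp {r : ℕ} (R : BoolRel r) : BoolRel r := {a | (fun i => !(a i)) ∈ R}

/-- `(P, Cl)` is a normalized OR-conj formula defining `R`: pins `P`, OR-clauses `Cl`
(distinct arguments, size ≥ 2, no pinned variable in a clause, antichain of clauses). -/
def NormalizedOR {r : ℕ} (R : BoolRel r) (P : Set (Fin r × Bool))
    (Cl : Set (Finset (Fin r))) : Prop :=
  (∀ a : Fin r → Bool, a ∈ R ↔
      ((∀ p ∈ P, a p.1 = p.2) ∧ (∀ C ∈ Cl, ∃ i ∈ C, a i = true))) ∧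
  (∀ p ∈ P, ∀ C ∈ Cl, p.1 ∉ C) ∧
  (∀ C ∈ Cl, 2 ≤ C.card) ∧
  (∀ C ∈ Cl, ∀ C' ∈ Cl, C ⊆ C' → C = C')

/-- `(P, Cl)` is a normalized NAND-conj formula defining `R`. -/
def NormalizedNAND {r : ℕ} (R : BoolRel r) (P : Set (Fin r × Bool))
    (Cl : Set (Finset (Fin r))) : Prop :=
  (∀ a : Fin r → Bool, a ∈ R ↔
      ((∀ p ∈ P, a p.1 = p.2) ∧ (∀ C ∈ Cl, ∃ i ∈ C, a i = false))) ∧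
  (∀ p ∈ P, ∀ C ∈ Cl, p.1 ∉ C) ∧
  (∀ C ∈ Cl, 2 ≤ C.card) ∧
  (∀ C ∈ Cl, ∀ C' ∈ Cl, C ⊆ C' → C = C')


namespace SimEqAux

/-- The subcube defined by a partial assignment. -/
def cube {r : ℕ} (μ : Fin r → Option Bool) : Set (Fin r → Bool) :=
  {b | ∀ t c, μ t = some c → b t = c}

/-- Normal form of a ppp-derived relation. -/
def NF (r : ℕ) (R : BoolRel r) (p : Σ s, BoolRel s) : Prop :=
  p.2 = ∅ ∨ ∃ (e : Fin p.1 → Fin r) (τ : Fin r → Option Bool),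
    Function.Injective e ∧
    p.2 = {a | ∃ b, b ∈ R ∧ b ∈ cube τ ∧ a = b ∘ e}

lemma nf_of_ppp {r : ℕ} {R : BoolRel r} {p : Σ s, BoolRel s}
    (h : Relation.ReflTransGen pppStep ⟨r, R⟩ p) : NF r R p := by
  induction h with
  | refl =>
    refine Or.inr ⟨id, fun _ => none, fun a b hab => hab, ?_⟩
    ext a
    constructor
    · intro ha
      show ∃ b, b ∈ R ∧ b ∈ cube (fun _ => none) ∧ a = b ∘ id
      refine ⟨a, ha, ?_, rfl⟩
      intro t c hc
      exact nomatch hc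
    · rintro ⟨b, hb, -, rfl⟩; exact hb
  | tail _ step ih =>
    cases step with
    | @perm rr S π =>
      rcases ih with hE | ⟨e, τ, he, hS⟩
      · have hE' : S = ∅ := hE
        left; show {a : Fin rr → Bool | (fun i => a (π i)) ∈ S} = ∅
        simp only [hE']; ext a; simp
      · have hS' : S = {a | ∃ b, b ∈ R ∧ b ∈ cube τ ∧ a = b ∘ e} := hS
        refine Or.inr ⟨e ∘ π.symm, τ, he.comp π.symm.injective, ?_⟩
        show {a : Fin rr → Bool | (fun i => a (π i)) ∈ S} = _
        ext a
        constructor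
        · intro ha
          have ha' : (fun t => a (π t)) ∈ S := ha
          rw [hS'] at ha'
          obtain ⟨b, hbR, hbτ, hab⟩ := ha'
          refine ⟨b, hbR, hbτ, funext fun x => ?_⟩
          have := congrFun hab (π.symm x)
          simpa using this
        · rintro ⟨b, hbR, hbτ, rfl⟩
          show (fun t => (b ∘ (e ∘ π.symm)) (π t)) ∈ S
          rw [hS']
          exact ⟨b, hbR, hbτ, funext fun x => by simp⟩
    | @pin rr S ip c =>
      rcases ih with hE | ⟨e, τ, he, hS⟩
      · have hE' : S = ∅ := hE
        left; show {a : Fin rr → Bool | a ∈ S ∧ a ip = c} = ∅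
        simp only [hE']; ext a; simp
      · have hS' : S = {a | ∃ b, b ∈ R ∧ b ∈ cube τ ∧ a = b ∘ e} := hS
        cases hτ : τ (e ip) with
        | none =>
          refine Or.inr ⟨e, Function.update τ (e ip) (some c), he, ?_⟩
          show {a : Fin rr → Bool | a ∈ S ∧ a ip = c} = _
          ext a
          constructor
          · rintro ⟨haS, hac⟩
            rw [hS'] at haS
            obtain ⟨b, hbR, hbτ, rfl⟩ := haS
            refine ⟨b, hbR, ?_, rfl⟩
            intro t c' hc'
            rcases eq_or_ne t (e ip) with rfl | hne
            · rw [Function.update_self] at hc'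
              cases hc'; exact hac
            · rw [Function.update_of_ne hne] at hc'
              exact hbτ t c' hc'
          · rintro ⟨b, hbR, hbτ, rfl⟩
            have hbτ' : b ∈ cube τ := by
              intro t c' hc'
              refine hbτ t c' ?_
              have hne : t ≠ e ip := by rintro rfl; rw [hτ] at hc'; cases hc'
              rw [Function.update_of_ne hne]; exact hc'
            refine ⟨?_, ?_⟩
            · rw [hS']; exact ⟨b, hbR, hbτ', rfl⟩
            · exact hbτ (e ip) c (by rw [Function.update_self])
        | some c' =>
          by_cases hcc : c' = c
          · subst hcc
            refine Or.inr ⟨e, τ, he, ?_⟩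
            show {a : Fin rr → Bool | a ∈ S ∧ a ip = c'} = _
            ext a
            constructor
            · rintro ⟨haS, -⟩; rw [hS'] at haS; exact haS
            · rintro ⟨b, hbR, hbτ, rfl⟩
              refine ⟨by rw [hS']; exact ⟨b, hbR, hbτ, rfl⟩, ?_⟩
              exact hbτ (e ip) c' hτ
          · left
            show {a : Fin rr → Bool | a ∈ S ∧ a ip = c} = ∅
            ext a
            simp only [Set.mem_setOf_eq, Set.mem_empty_iff_false, iff_false]
            rintro ⟨haS, hac⟩
            rw [hS'] at haS
            obtain ⟨b, hbR, hbτ, rfl⟩ := haS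
            exact hcc (by rw [← hac]; exact (hbτ (e ip) c' hτ).symm)
    | @proj rr S ip =>
      rcases ih with hE | ⟨e, τ, he, hS⟩
      · have hE' : S = ∅ := hE
        left; show {a : Fin rr → Bool | ∃ b ∈ S, a = fun j => b (ip.succAbove j)} = ∅
        simp only [hE']; ext a; simp
      · have hS' : S = {a | ∃ b, b ∈ R ∧ b ∈ cube τ ∧ a = b ∘ e} := hS
        refine Or.inr ⟨e ∘ ip.succAbove, τ,
          he.comp (Fin.succAbove_right_injective), ?_⟩
        show {a : Fin rr → Bool | ∃ b ∈ S, a = fun j => b (ip.succAbove j)} = _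
        ext a
        constructor
        · rintro ⟨b', hb'S, rfl⟩
          rw [hS'] at hb'S
          obtain ⟨b, hbR, hbτ, rfl⟩ := hb'S
          exact ⟨b, hbR, hbτ, rfl⟩
        · rintro ⟨b, hbR, hbτ, rfl⟩
          exact ⟨b ∘ e, by rw [hS']; exact ⟨b, hbR, hbτ, rfl⟩, rfl⟩

end SimEqAux

namespace SimEqAux

lemma cube_cons {n : ℕ} (o : Option Bool) (ρ : Fin n → Option Bool) (x : Fin (n+1) → Bool) :
    x ∈ cube (Fin.cons o ρ) ↔ (∀ c, o = some c → x 0 = c) ∧ Fin.tail x ∈ cube ρ := by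
  constructor
  · intro hx
    refine ⟨fun c hc => hx 0 c (by simpa using hc), fun t c hc => hx t.succ c (by simpa using hc)⟩
  · rintro ⟨h0, ht⟩ t c hc
    refine t.cases (fun hc => h0 c (by simpa using hc)) (fun s hc => ht s c (by simpa using hc)) hc

lemma balance : ∀ (n : ℕ) (A B : Set (Fin n → Bool)), A.Nonempty → B.Nonempty →
    ∃ ρ : Fin n → Option Bool,
      (∃! a, a ∈ A ∧ a ∈ cube ρ) ∧ (∃! b, b ∈ B ∧ b ∈ cube ρ) ∧
      (∀ t c, ρ t = some c → (∃ a ∈ A, a t = c) ∧ (∃ b ∈ B, b t = c)) := by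
  intro n
  induction n with
  | zero =>
    rintro A B ⟨a₀, ha₀⟩ ⟨b₀, hb₀⟩
    refine ⟨fun _ => none,
      ⟨a₀, ⟨ha₀, fun t c hc => nomatch hc⟩, fun y _ => Subsingleton.elim y a₀⟩,
      ⟨b₀, ⟨hb₀, fun t c hc => nomatch hc⟩, fun y _ => Subsingleton.elim y b₀⟩,
      fun t c hc => nomatch hc⟩
  | succ n IH =>
    intro A B hA hB
    by_cases hc : ∃ c : Bool, (∃ a ∈ A, a 0 = c) ∧ (∃ b ∈ B, b 0 = c)
    · obtain ⟨c, ⟨a₀, ha₀, ha0⟩, ⟨b₀, hb₀, hb0⟩⟩ := hc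
      set A' : Set (Fin n → Bool) := {a' | Fin.cons c a' ∈ A} with hA'def
      set B' : Set (Fin n → Bool) := {b' | Fin.cons c b' ∈ B} with hB'def
      have hA' : A'.Nonempty := ⟨Fin.tail a₀, by
        show Fin.cons c (Fin.tail a₀) ∈ A
        rw [← ha0, Fin.cons_self_tail]; exact ha₀⟩
      have hB' : B'.Nonempty := ⟨Fin.tail b₀, by
        show Fin.cons c (Fin.tail b₀) ∈ B
        rw [← hb0, Fin.cons_self_tail]; exact hb₀⟩
      obtain ⟨ρ', h1, h2, h3⟩ := IH A' B' hA' hB'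
      refine ⟨Fin.cons (some c) ρ', ?_, ?_, ?_⟩
      · obtain ⟨a', ⟨ha'A, ha'c⟩, huniq⟩ := h1
        refine ⟨Fin.cons c a', ⟨ha'A, ?_⟩, ?_⟩
        · rw [cube_cons]
          exact ⟨fun c' hc' => by cases hc'; simp, by simpa using ha'c⟩
        · intro y ⟨hyA, hyc⟩
          rw [cube_cons] at hyc
          obtain ⟨hy0, hyt⟩ := hyc
          have hy0' : y 0 = c := hy0 c rfl
          have htail : Fin.tail y = a' := by
            refine huniq (Fin.tail y) ⟨?_, hyt⟩
            show Fin.cons c (Fin.tail y) ∈ A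
            rw [← hy0', Fin.cons_self_tail]; exact hyA
          rw [← htail, ← hy0', Fin.cons_self_tail]
      · obtain ⟨b', ⟨hb'B, hb'c⟩, huniq⟩ := h2
        refine ⟨Fin.cons c b', ⟨hb'B, ?_⟩, ?_⟩
        · rw [cube_cons]
          exact ⟨fun c' hc' => by cases hc'; simp, by simpa using hb'c⟩
        · intro y ⟨hyB, hyc⟩
          rw [cube_cons] at hyc
          obtain ⟨hy0, hyt⟩ := hyc
          have hy0' : y 0 = c := hy0 c rfl
          have htail : Fin.tail y = b' := by
            refine huniq (Fin.tail y) ⟨?_, hyt⟩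
            show Fin.cons c (Fin.tail y) ∈ B
            rw [← hy0', Fin.cons_self_tail]; exact hyB
          rw [← htail, ← hy0', Fin.cons_self_tail]
      · intro t c' hc'
        refine t.cases (fun hc' => ?_) (fun s hc' => ?_) hc'
        · have : c = c' := by simpa using hc'
          subst this
          exact ⟨⟨a₀, ha₀, ha0⟩, ⟨b₀, hb₀, hb0⟩⟩
        · have hs : ρ' s = some c' := by simpa using hc'
          obtain ⟨⟨a', ha'A, ha't⟩, ⟨b', hb'B, hb't⟩⟩ := h3 s c' hs
          exact ⟨⟨Fin.cons c a', ha'A, by simpa using ha't⟩,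
                 ⟨Fin.cons c b', hb'B, by simpa using hb't⟩⟩
    · push_neg at hc
      obtain ⟨a₀, ha₀⟩ := hA
      obtain ⟨b₀, hb₀⟩ := hB
      have hAB : a₀ 0 ≠ b₀ 0 := by
        intro hEq
        exact hc (a₀ 0) ⟨a₀, ha₀, rfl⟩ b₀ hb₀ hEq.symm
      have hAside : ∀ a ∈ A, a 0 = a₀ 0 := by
        intro a haA
        by_contra hne
        have : a 0 = b₀ 0 := by
          revert hAB hne; cases a 0 <;> cases a₀ 0 <;> cases b₀ 0 <;> simp
        exact hc (a 0) ⟨a, haA, rfl⟩ b₀ hb₀ this.symm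
      have hBside : ∀ b ∈ B, b 0 = b₀ 0 := by
        intro b hbB
        by_contra hne
        have : b 0 = a₀ 0 := by
          revert hAB hne; cases b 0 <;> cases a₀ 0 <;> cases b₀ 0 <;> simp
        exact hc (a₀ 0) ⟨a₀, ha₀, rfl⟩ b hbB this
      set A' : Set (Fin n → Bool) := {a' | Fin.cons (a₀ 0) a' ∈ A} with hA'def
      set B' : Set (Fin n → Bool) := {b' | Fin.cons (b₀ 0) b' ∈ B} with hB'def
      have hA' : A'.Nonempty := ⟨Fin.tail a₀, by
        show Fin.cons (a₀ 0) (Fin.tail a₀) ∈ A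
        rw [Fin.cons_self_tail]; exact ha₀⟩
      have hB' : B'.Nonempty := ⟨Fin.tail b₀, by
        show Fin.cons (b₀ 0) (Fin.tail b₀) ∈ B
        rw [Fin.cons_self_tail]; exact hb₀⟩
      obtain ⟨ρ', h1, h2, h3⟩ := IH A' B' hA' hB'
      refine ⟨Fin.cons none ρ', ?_, ?_, ?_⟩
      · obtain ⟨a', ⟨ha'A, ha'c⟩, huniq⟩ := h1
        refine ⟨Fin.cons (a₀ 0) a', ⟨ha'A, ?_⟩, ?_⟩
        · rw [cube_cons]
          exact ⟨fun c' hc' => absurd hc' (by simp), by simpa using ha'c⟩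
        · intro y ⟨hyA, hyc⟩
          rw [cube_cons] at hyc
          have hy0' : y 0 = a₀ 0 := hAside y hyA
          have htail : Fin.tail y = a' := by
            refine huniq (Fin.tail y) ⟨?_, hyc.2⟩
            show Fin.cons (a₀ 0) (Fin.tail y) ∈ A
            rw [← hy0', Fin.cons_self_tail]; exact hyA
          rw [← htail, ← hy0', Fin.cons_self_tail]
      · obtain ⟨b', ⟨hb'B, hb'c⟩, huniq⟩ := h2
        refine ⟨Fin.cons (b₀ 0) b', ⟨hb'B, ?_⟩, ?_⟩
        · rw [cube_cons]
          exact ⟨fun c' hc' => absurd hc' (by simp), by simpa using hb'c⟩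
        · intro y ⟨hyB, hyc⟩
          rw [cube_cons] at hyc
          have hy0' : y 0 = b₀ 0 := hBside y hyB
          have htail : Fin.tail y = b' := by
            refine huniq (Fin.tail y) ⟨?_, hyc.2⟩
            show Fin.cons (b₀ 0) (Fin.tail y) ∈ B
            rw [← hy0', Fin.cons_self_tail]; exact hyB
          rw [← htail, ← hy0', Fin.cons_self_tail]
      · intro t c' hc'
        refine t.cases (fun hc' => ?_) (fun s hc' => ?_) hc'
        · exact nomatch (show (none : Option Bool) = some c' by simpa using hc')
        · have hs : ρ' s = some c' := by simpa using hc'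
          obtain ⟨⟨a', ha'A, ha't⟩, ⟨b', hb'B, hb't⟩⟩ := h3 s c' hs
          exact ⟨⟨Fin.cons (a₀ 0) a', ha'A, by simpa using ha't⟩,
                 ⟨Fin.cons (b₀ 0) b', hb'B, by simpa using hb't⟩⟩

end SimEqAux

namespace SimEqAux

/-- Data for the equality-simulation gadget. -/
def GoodPins {r : ℕ} (R : BoolRel r) (μ : Fin r → Option Bool) (i j : Fin r)
    (flip : Bool) : Prop :=
  i ≠ j ∧ μ i = none ∧ μ j = none ∧
  (∀ b, b ∈ R → b ∈ cube μ → (if flip then b j = !(b i) else (b i = true → b j = true))) ∧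
  (∃! b, b ∈ R ∧ b ∈ cube μ ∧ b i = false ∧ b j = flip) ∧
  (∃! b, b ∈ R ∧ b ∈ cube μ ∧ b i = true ∧ b j = !flip)

lemma extract_goodPins {r : ℕ} {R : BoolRel r} {Q : BoolRel 2} (flip : Bool)
    (hQ : pppLE Q R)
    (a₀ a₁ : Fin 2 → Bool)
    (ha₀Q : a₀ ∈ Q) (ha₁Q : a₁ ∈ Q)
    (ha₀0 : a₀ 0 = false) (ha₀1 : a₀ 1 = flip)
    (ha₁0 : a₁ 0 = true) (ha₁1 : a₁ 1 = !flip)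
    (hcl : ∀ a ∈ Q, (if flip then a 1 = !(a 0) else (a 0 = true → a 1 = true))) :
    ∃ (μ : Fin r → Option Bool) (i j : Fin r), GoodPins R μ i j flip := by
  have hnf := nf_of_ppp (R := R) hQ
  rcases hnf with hE | ⟨e, τ, he, hQeq⟩
  · exact absurd ((show Q = ∅ from hE) ▸ ha₀Q) (Set.notMem_empty a₀)
  have hQeq' : Q = {a | ∃ b, b ∈ R ∧ b ∈ cube τ ∧ a = b ∘ e} := hQeq
  set i : Fin r := e 0 with hi
  set j : Fin r := e 1 with hj
  have h01 : (0 : Fin 2) ≠ 1 := by decide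
  have hij : i ≠ j := fun hEq => h01 (he hEq)
  -- membership facts
  have hmem : ∀ b, b ∈ R → b ∈ cube τ → (b ∘ e) ∈ Q := by
    intro b hbR hbτ; rw [hQeq']; exact ⟨b, hbR, hbτ, rfl⟩
  set A : Set (Fin r → Bool) :=
    {b | b ∈ R ∧ b ∈ cube τ ∧ b i = false ∧ b j = flip} with hAdef
  set B : Set (Fin r → Bool) :=
    {b | b ∈ R ∧ b ∈ cube τ ∧ b i = true ∧ b j = !flip} with hBdef
  have hAne : A.Nonempty := by
    rw [hQeq'] at ha₀Q
    obtain ⟨b, hbR, hbτ, hab⟩ := ha₀Q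
    refine ⟨b, hbR, hbτ, ?_, ?_⟩
    · rw [← ha₀0, hab]; rfl
    · rw [← ha₀1, hab]; rfl
  have hBne : B.Nonempty := by
    rw [hQeq'] at ha₁Q
    obtain ⟨b, hbR, hbτ, hab⟩ := ha₁Q
    refine ⟨b, hbR, hbτ, ?_, ?_⟩
    · rw [← ha₁0, hab]; rfl
    · rw [← ha₁1, hab]; rfl
  obtain ⟨ρ, hA1, hB1, hwit⟩ := balance r A B hAne hBne
  set μ : Fin r → Option Bool := fun t => (τ t).elim (ρ t) some with hμdef
  -- compatibility and cube splitting
  have hμeval : ∀ t, μ t = (τ t).elim (ρ t) some := fun t => rfl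
  have hcube : ∀ b : Fin r → Bool, b ∈ cube μ ↔ (b ∈ cube τ ∧ b ∈ cube ρ) := by
    intro b
    constructor
    · intro hb
      constructor
      · intro t c hc
        exact hb t c (by rw [hμeval, hc]; rfl)
      · intro t c hc
        cases hτt : τ t with
        | none => exact hb t c (by rw [hμeval, hτt]; exact hc)
        | some c' =>
          obtain ⟨⟨a, haA, hat⟩, -⟩ := hwit t c hc
          have h1 : a t = c' := haA.2.1 t c' hτt
          have h2 : b t = c' := hb t c' (by rw [hμeval, hτt]; rfl)
          rw [h2, ← h1, hat]
    · rintro ⟨hbτ, hbρ⟩ t c hc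
      cases hτt : τ t with
      | none =>
        have h := hc
        rw [hμeval, hτt] at h
        exact hbρ t c h
      | some cc =>
        have h := hc
        rw [hμeval, hτt] at h
        have hccc : cc = c := by simpa using h
        rw [← hccc]; exact hbτ t cc hτt
  -- μ is none on i and j
  obtain ⟨aA, haA⟩ := hAne
  obtain ⟨bB, hbB⟩ := hBne
  have hμi : μ i = none := by
    cases hτi : τ i with
    | some c =>
      have h1 : aA i = c := haA.2.1 i c hτi
      have h2 : bB i = c := hbB.2.1 i c hτi
      rw [haA.2.2.1] at h1; rw [hbB.2.2.1] at h2
      exact absurd (h1.trans h2.symm) (by simp)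
    | none =>
      cases hρi : ρ i with
      | some c =>
        obtain ⟨⟨a, haA', hat⟩, ⟨b, hbB', hbt⟩⟩ := hwit i c hρi
        rw [haA'.2.2.1] at hat; rw [hbB'.2.2.1] at hbt
        exact absurd (hat.trans hbt.symm) (by simp)
      | none =>
        show (τ i).elim (ρ i) some = none
        rw [hτi]; exact hρi

  have hμj : μ j = none := by
    cases hτj : τ j with
    | some c =>
      have h1 : aA j = c := haA.2.1 j c hτj
      have h2 : bB j = c := hbB.2.1 j c hτj
      rw [haA.2.2.2] at h1; rw [hbB.2.2.2] at h2
      rw [← h2] at h1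
      exact absurd h1 (by cases flip <;> simp)
    | none =>
      cases hρj : ρ j with
      | some c =>
        obtain ⟨⟨a, haA', hat⟩, ⟨b, hbB', hbt⟩⟩ := hwit j c hρj
        rw [haA'.2.2.2] at hat; rw [hbB'.2.2.2] at hbt
        rw [← hbt] at hat
        exact absurd hat (by cases flip <;> simp)
      | none =>
        show (τ j).elim (ρ j) some = none
        rw [hτj]; exact hρj
  refine ⟨μ, i, j, hij, hμi, hμj, ?_, ?_, ?_⟩
  · intro b hbR hbμ
    have hbτ := (hcube b).1 hbμ
    have := hcl (b ∘ e) (hmem b hbR hbτ.1)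
    exact this
  · obtain ⟨a, ⟨haA', haρ⟩, huniq⟩ := hA1
    refine ⟨a, ⟨haA'.1, (hcube a).2 ⟨haA'.2.1, haρ⟩, haA'.2.2.1, haA'.2.2.2⟩, ?_⟩
    intro y ⟨hyR, hyμ, hyi, hyj⟩
    have hyc := (hcube y).1 hyμ
    exact huniq y ⟨⟨hyR, hyc.1, hyi, hyj⟩, hyc.2⟩
  · obtain ⟨b, ⟨hbB', hbρ⟩, huniq⟩ := hB1
    refine ⟨b, ⟨hbB'.1, (hcube b).2 ⟨hbB'.2.1, hbρ⟩, hbB'.2.2.1, hbB'.2.2.2⟩, ?_⟩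
    intro y ⟨hyR, hyμ, hyi, hyj⟩
    have hyc := (hcube y).1 hyμ
    exact huniq y ⟨⟨hyR, hyc.1, hyi, hyj⟩, hyc.2⟩

lemma goodPins_of_req {r : ℕ} {R : BoolRel r} (hQ : pppLE Req R) :
    ∃ (μ : Fin r → Option Bool) (i j : Fin r), GoodPins R μ i j false := by
  refine extract_goodPins false hQ (fun _ => false) (fun _ => true) rfl rfl rfl rfl rfl rfl ?_
  intro a ha
  simp only [if_neg Bool.false_ne_true]
  intro h0
  have : a 0 = a 1 := ha
  rw [← this, h0]

lemma goodPins_of_rimp {r : ℕ} {R : BoolRel r} (hQ : pppLE Rimp R) :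
    ∃ (μ : Fin r → Option Bool) (i j : Fin r), GoodPins R μ i j false := by
  refine extract_goodPins false hQ (fun _ => false) (fun _ => true) ?_ ?_ rfl rfl rfl rfl ?_
  · show (false = true → false = true); simp
  · show (true = true → true = true); simp
  · intro a ha
    simp only [if_neg Bool.false_ne_true]
    exact ha

lemma goodPins_of_rneq {r : ℕ} {R : BoolRel r} (hQ : pppLE Rneq R) :
    ∃ (μ : Fin r → Option Bool) (i j : Fin r), GoodPins R μ i j true := by
  refine extract_goodPins true hQ ![false, true] ![true, false] ?_ ?_ rfl rfl rfl rfl ?_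
  · show ¬(false = true); simp
  · show ¬(true = false); simp
  · intro a ha
    have : a 0 ≠ a 1 := ha
    simp only [if_pos rfl]
    revert this; cases a 0 <;> cases a 1 <;> simp

end SimEqAux

namespace SimEqAux

def LL (m r : ℕ) : ℕ := 2*(m+2) + 2*(m+2)*r

lemma LL_pos (m r : ℕ) : 0 < LL m r :=
  Nat.lt_of_lt_of_le (by omega) (Nat.le_add_right (2*(m+2)) _)

lemma le_LL (m r : ℕ) : 2*(m+2) ≤ LL m r := Nat.le_add_right _ _

def mkV (m r n : ℕ) : Fin (LL m r) := ⟨n % LL m r, Nat.mod_lt _ (LL_pos m r)⟩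

lemma mkV_val (m r n : ℕ) (hn : n < LL m r) : (mkV m r n).val = n := Nat.mod_eq_of_lt hn

def nodeIdx (m h : ℕ) : ℕ := if h % 2 = 0 then h / 2 else (m+2) + h / 2

lemma nodeIdx_lt (m : ℕ) {h : ℕ} (hh : h < 2*(m+2)) : nodeIdx m h < 2*(m+2) := by
  unfold nodeIdx; split <;> omega

def nodeV (m r h : ℕ) : Fin (LL m r) := mkV m r (nodeIdx m h)

lemma nodeV_val (m r : ℕ) {h : ℕ} (hh : h < 2*(m+2)) :
    (nodeV m r h).val = nodeIdx m h :=
  mkV_val m r _ (Nat.lt_of_lt_of_le (nodeIdx_lt m hh) (le_LL m r))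

lemma nodeIdx_inj (m : ℕ) {h h' : ℕ} (hh : h < 2*(m+2)) (hh' : h' < 2*(m+2))
    (he : nodeIdx m h = nodeIdx m h') : h = h' := by
  unfold nodeIdx at he; split at he <;> split at he <;> omega

def wIdx (m r g t : ℕ) : ℕ := 2*(m+2) + (r*g + t)

lemma wIdx_lt (m : ℕ) {r g t : ℕ} (hg : g < 2*(m+2)) (ht : t < r) :
    wIdx m r g t < LL m r := by
  have h1 : r*g + t < r*(g+1) := by rw [Nat.mul_succ]; omega
  have h2 : r*(g+1) ≤ r*(2*(m+2)) := Nat.mul_le_mul_left r hg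
  have h3 : r*(2*(m+2)) = 2*(m+2)*r := Nat.mul_comm _ _
  unfold wIdx LL; omega

def wV (m r g : ℕ) (t : Fin r) : Fin (LL m r) := mkV m r (wIdx m r g t.val)

lemma wV_val (m : ℕ) {r : ℕ} {g : ℕ} (hg : g < 2*(m+2)) (t : Fin r) :
    (wV m r g t).val = wIdx m r g t.val :=
  mkV_val m r _ (wIdx_lt m hg t.isLt)

lemma wIdx_decompose {m r g t : ℕ} (hr : 0 < r) (ht : t < r) :
    (wIdx m r g t - 2*(m+2)) / r = g ∧ (wIdx m r g t - 2*(m+2)) % r = t := by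
  have h1 : wIdx m r g t - 2*(m+2) = r*g + t := by unfold wIdx; omega
  constructor
  · rw [h1, Nat.mul_add_div hr, Nat.div_eq_of_lt ht]; omega
  · rw [h1, Nat.mul_add_mod, Nat.mod_eq_of_lt ht]

/-- value pattern of node `h` when the designated value is `val`. -/
def nvalB (flip val : Bool) (h : ℕ) : Bool := xor val (flip && decide (h % 2 = 1))

lemma nval_next (m : ℕ) (flip val : Bool) (g : ℕ) :
    nvalB flip val ((g+1) % (2*(m+2))) = xor (nvalB flip val g) flip := by
  unfold nvalB
  have hdvd : (2:ℕ) ∣ 2*(m+2) := ⟨m+2, rfl⟩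
  have h2 : ((g+1) % (2*(m+2))) % 2 = (g+1) % 2 := Nat.mod_mod_of_dvd _ hdvd
  rw [h2]
  rcases Nat.mod_two_eq_zero_or_one g with hg | hg
  · have hg1 : (g+1) % 2 = 1 := by omega
    rw [hg1, hg]; cases val <;> cases flip <;> rfl
  · have hg1 : (g+1) % 2 = 0 := by omega
    rw [hg1, hg]; cases val <;> cases flip <;> rfl

lemma nval_even (flip val : Bool) {h : ℕ} (hh : h % 2 = 0) : nvalB flip val h = val := by
  unfold nvalB; rw [hh]; cases val <;> cases flip <;> rfl

lemma nval_odd (flip val : Bool) {h : ℕ} (hh : h % 2 = 1) :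
    nvalB flip val h = xor val flip := by
  unfold nvalB; rw [hh]; cases val <;> cases flip <;> rfl

section Gadget

variable {r : ℕ} (m : ℕ) (R : BoolRel r) (μ : Fin r → Option Bool) (i j : Fin r)
  (flip : Bool) (b₀ b₁ : Fin r → Bool)

def eScope (g : ℕ) : Fin r → Fin (LL m r) := fun t =>
  if t = i then nodeV m r g
  else if t = j then nodeV m r ((g+1) % (2*(m+2)))
  else wV m r g t

def edgeCon (g : ℕ) : Constraint (Fin (LL m r)) := ⟨r, R, eScope m i j g⟩

def pinVal (t : Fin r) : Option Bool := if t = i ∨ t = j then some false else μ t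

def pinCon (c : Bool) (g : ℕ) (t : Fin r) : Constraint (Fin (LL m r)) :=
  ⟨1, if c then Rone else Rzero, fun _ => wV m r g t⟩

def pinsL : List (Constraint (Fin (LL m r))) :=
  (List.range (2*(m+2))).flatMap fun g =>
    (List.finRange r).flatMap fun t =>
      ((pinVal μ i j t).map fun c => pinCon m c g t).toList

def inst : CSPInstance (Fin (LL m r)) :=
  ⟨((List.range (2*(m+2))).map (edgeCon m R i j)) ++ pinsL m μ i j⟩

def bE (val : Bool) (g : ℕ) : Fin r → Bool := if nvalB flip val g then b₁ else b₀

def sigval (val : Bool) : Fin (LL m r) → Bool := fun n =>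
  if n.val < m+2 then val
  else if n.val < 2*(m+2) then xor val flip
  else
    let q := n.val - 2*(m+2)
    let t : Fin r := ⟨q % r, Nat.mod_lt _ i.pos⟩
    if t = i ∨ t = j then false else bE flip b₀ b₁ val (q / r) t

end Gadget

end SimEqAux

namespace SimEqAux

section Gadget2

variable {r : ℕ} (m : ℕ) (R : BoolRel r) (μ : Fin r → Option Bool) (i j : Fin r)
  (flip : Bool) (b₀ b₁ : Fin r → Bool)

lemma pinCon_sat (c : Bool) (g : ℕ) (t : Fin r) (σ : Fin (LL m r) → Bool) :
    (pinCon m c g t).sat σ ↔ σ (wV m r g t) = c := by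
  cases c
  · show (fun _ : Fin 1 => σ (wV m r g t)) ∈ Rzero ↔ _
    exact Iff.rfl
  · show (fun _ : Fin 1 => σ (wV m r g t)) ∈ Rone ↔ _
    exact Iff.rfl

lemma sat_iff (σ : Fin (LL m r) → Bool) :
    (inst m R μ i j).sat σ ↔
      ((∀ g, g < 2*(m+2) → (fun t => σ (eScope m i j g t)) ∈ R) ∧
       (∀ g, g < 2*(m+2) → ∀ t : Fin r, ∀ c, pinVal μ i j t = some c →
          σ (wV m r g t) = c)) := by
  constructor
  · intro hs
    constructor
    · intro g hg
      exact hs (edgeCon m R i j g)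
        (List.mem_append_left _ (List.mem_map_of_mem (List.mem_range.mpr hg)))
    · intro g hg t c hptc
      have hmem : pinCon m c g t ∈ pinsL m μ i j := by
        unfold pinsL
        refine List.mem_flatMap.mpr ⟨g, List.mem_range.mpr hg, ?_⟩
        refine List.mem_flatMap.mpr ⟨t, List.mem_finRange t, ?_⟩
        rw [hptc]; simp
      exact (pinCon_sat m c g t σ).mp (hs _ (List.mem_append_right _ hmem))
  · rintro ⟨he, hp⟩ c hc
    rcases List.mem_append.mp hc with hce | hcp
    · obtain ⟨g, hg, rfl⟩ := List.mem_map.mp hce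
      exact he g (List.mem_range.mp hg)
    · unfold pinsL at hcp
      obtain ⟨g, hg, hcp2⟩ := List.mem_flatMap.mp hcp
      obtain ⟨t, -, hcp3⟩ := List.mem_flatMap.mp hcp2
      cases hpv : pinVal μ i j t with
      | none => rw [hpv] at hcp3; simp at hcp3
      | some cv =>
        rw [hpv] at hcp3
        simp only [Option.map_some, Option.toList_some, List.mem_singleton] at hcp3
        subst hcp3
        exact (pinCon_sat m cv g t σ).mpr (hp g (List.mem_range.mp hg) t cv hpv)

/-- evaluation of the canonical assignment at node variables -/
lemma sigval_node (val : Bool) {h : ℕ} (hh : h < 2*(m+2)) :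
    sigval m i j flip b₀ b₁ val (nodeV m r h) = nvalB flip val h := by
  have hv : (nodeV m r h).val = nodeIdx m h := nodeV_val m r hh
  unfold sigval
  rcases Nat.mod_two_eq_zero_or_one h with h2 | h2
  · have hlt : (nodeV m r h).val < m+2 := by
      rw [hv]; unfold nodeIdx; rw [if_pos h2]; omega
    rw [if_pos hlt, nval_even flip val h2]
  · have hge : ¬ (nodeV m r h).val < m+2 := by
      rw [hv]; unfold nodeIdx; rw [if_neg (by omega)]; omega
    have hlt2 : (nodeV m r h).val < 2*(m+2) := by
      rw [hv]; exact nodeIdx_lt m hh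
    rw [if_neg hge, if_pos hlt2, nval_odd flip val h2]

/-- evaluation of the canonical assignment at w-variables -/
lemma sigval_w (val : Bool) {g : ℕ} (hg : g < 2*(m+2)) (t : Fin r) :
    sigval m i j flip b₀ b₁ val (wV m r g t) =
      if t = i ∨ t = j then false else bE flip b₀ b₁ val g t := by
  have hv : (wV m r g t).val = wIdx m r g t.val := wV_val m hg t
  have hw1 : ¬ (wV m r g t).val < m+2 := by rw [hv]; unfold wIdx; omega
  have hw2 : ¬ (wV m r g t).val < 2*(m+2) := by rw [hv]; unfold wIdx; omega
  obtain ⟨hq1, hq2⟩ := wIdx_decompose (m := m) (g := g) i.pos t.isLt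
  unfold sigval
  rw [if_neg hw1, if_neg hw2]
  simp only []
  have ht' : (⟨((wV m r g t).val - 2*(m+2)) % r, Nat.mod_lt _ i.pos⟩ : Fin r) = t := by
    apply Fin.ext
    show ((wV m r g t).val - 2*(m+2)) % r = t.val
    rw [hv]; exact hq2
  have hdiv' : ((wV m r g t).val - 2*(m+2)) / r = g := by rw [hv]; exact hq1
  rw [ht', hdiv']

lemma sigval_low (val : Bool) (n : Fin (LL m r)) (hn : n.val < m+2) :
    sigval m i j flip b₀ b₁ val n = val := by
  unfold sigval; rw [if_pos hn]

end Gadget2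

end SimEqAux

namespace SimEqAux

section Gadget3

variable {r : ℕ} (m : ℕ) (R : BoolRel r) (μ : Fin r → Option Bool) (i j : Fin r)
  (flip : Bool) (b₀ b₁ : Fin r → Bool)

lemma eScope_i (g : ℕ) : eScope m i j g i = nodeV m r g := if_pos rfl

lemma eScope_j (hij : i ≠ j) (g : ℕ) :
    eScope m i j g j = nodeV m r ((g+1) % (2*(m+2))) := by
  unfold eScope
  rw [if_neg (fun h => hij h.symm), if_pos rfl]

lemma eScope_other {t : Fin r} (hti : t ≠ i) (htj : t ≠ j) (g : ℕ) :
    eScope m i j g t = wV m r g t := by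
  unfold eScope; rw [if_neg hti, if_neg htj]

lemma bE_eq_b0 {r' : ℕ} (flip : Bool) (b₀ b₁ : Fin r' → Bool) (val : Bool) (g : ℕ)
    (hnv : nvalB flip val g = false) : bE flip b₀ b₁ val g = b₀ := by
  unfold bE; rw [hnv]; simp

lemma bE_eq_b1 {r' : ℕ} (flip : Bool) (b₀ b₁ : Fin r' → Bool) (val : Bool) (g : ℕ)
    (hnv : nvalB flip val g = true) : bE flip b₀ b₁ val g = b₁ := by
  unfold bE; rw [hnv]; simp

lemma sat_canonical (val : Bool)
    (hij : i ≠ j)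
    (hb₀R : b₀ ∈ R) (hb₀μ : b₀ ∈ cube μ) (hb₀i : b₀ i = false) (hb₀j : b₀ j = flip)
    (hb₁R : b₁ ∈ R) (hb₁μ : b₁ ∈ cube μ) (hb₁i : b₁ i = true) (hb₁j : b₁ j = !flip) :
    (inst m R μ i j).sat (sigval m i j flip b₀ b₁ val) := by
  rw [sat_iff]
  constructor
  · intro g hg
    have htuple : (fun t => sigval m i j flip b₀ b₁ val (eScope m i j g t))
        = bE flip b₀ b₁ val g := by
      funext t
      by_cases hti : t = i
      · rw [hti, eScope_i, sigval_node m i j flip b₀ b₁ val hg]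
        cases hnv : nvalB flip val g
        · rw [bE_eq_b0 flip b₀ b₁ val g hnv, hb₀i]
        · rw [bE_eq_b1 flip b₀ b₁ val g hnv, hb₁i]
      · by_cases htj : t = j
        · rw [htj, eScope_j m i j hij g,
            sigval_node m i j flip b₀ b₁ val (Nat.mod_lt _ (by omega)),
            nval_next m flip val g]
          cases hnv : nvalB flip val g
          · rw [bE_eq_b0 flip b₀ b₁ val g hnv, hb₀j]; cases flip <;> rfl
          · rw [bE_eq_b1 flip b₀ b₁ val g hnv, hb₁j]; cases flip <;> rfl
        · rw [eScope_other m i j hti htj g, sigval_w m i j flip b₀ b₁ val hg t,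
            if_neg (by tauto)]
    show (fun t => sigval m i j flip b₀ b₁ val (eScope m i j g t)) ∈ R
    rw [htuple]
    cases hnv : nvalB flip val g
    · rw [bE_eq_b0 flip b₀ b₁ val g hnv]; exact hb₀R
    · rw [bE_eq_b1 flip b₀ b₁ val g hnv]; exact hb₁R
  · intro g hg t c hpc
    rw [sigval_w m i j flip b₀ b₁ val hg t]
    unfold pinVal at hpc
    by_cases ht : t = i ∨ t = j
    · rw [if_pos ht]
      rw [if_pos ht] at hpc
      exact Option.some.inj hpc
    · rw [if_neg ht]
      rw [if_neg ht] at hpc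
      cases hnv : nvalB flip val g
      · rw [bE_eq_b0 flip b₀ b₁ val g hnv]; exact hb₀μ t c hpc
      · rw [bE_eq_b1 flip b₀ b₁ val g hnv]; exact hb₁μ t c hpc

lemma edge_basic (σ : Fin (LL m r) → Bool) (hμi : μ i = none) (hμj : μ j = none)
    (he : ∀ g, g < 2*(m+2) → (fun t => σ (eScope m i j g t)) ∈ R)
    (hp : ∀ g, g < 2*(m+2) → ∀ t : Fin r, ∀ c, pinVal μ i j t = some c →
        σ (wV m r g t) = c)
    (g : ℕ) (hg : g < 2*(m+2)) :
    (fun t => σ (eScope m i j g t)) ∈ R ∧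
    (fun t => σ (eScope m i j g t)) ∈ cube μ := by
  refine ⟨he g hg, ?_⟩
  intro t c hc
  have hti : t ≠ i := fun h => by rw [h, hμi] at hc; cases hc
  have htj : t ≠ j := fun h => by rw [h, hμj] at hc; cases hc
  have hpv : pinVal μ i j t = some c := by
    unfold pinVal; rw [if_neg (by tauto)]; exact hc
  show σ (eScope m i j g t) = c
  rw [eScope_other m i j hti htj g]
  exact hp g hg t c hpv

end Gadget3

end SimEqAux

namespace SimEqAux

section Gadget4

variable {r : ℕ} (m : ℕ) (R : BoolRel r) (μ : Fin r → Option Bool) (i j : Fin r)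
  (flip : Bool) (b₀ b₁ : Fin r → Bool)

/-- Node values are forced by the designated pattern. -/
lemma node_values (σ : Fin (LL m r) → Bool) (val : Bool)
    (hij : i ≠ j) (hμi : μ i = none) (hμj : μ j = none)
    (hdir : ∀ b, b ∈ R → b ∈ cube μ →
      (if flip then b j = !(b i) else (b i = true → b j = true)))
    (hsat : (inst m R μ i j).sat σ)
    (hpat : ∀ v : Fin (LL m r), v.val < m+2 → σ v = val) :
    ∀ h, h < 2*(m+2) → σ (nodeV m r h) = nvalB flip val h := by
  rw [sat_iff] at hsat
  obtain ⟨he, hp⟩ := hsat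
  have heven : ∀ h, h < 2*(m+2) → h % 2 = 0 → σ (nodeV m r h) = val := by
    intro h hh h2
    apply hpat
    rw [nodeV_val m r hh]
    unfold nodeIdx; rw [if_pos h2]; omega
  intro h hh
  rcases Nat.mod_two_eq_zero_or_one h with h2 | h2
  · rw [nval_even flip val h2]; exact heven h hh h2
  · rw [nval_odd flip val h2]
    have hh1 : 1 ≤ h := by omega
    have hprev2 : (h-1) % 2 = 0 := by omega
    have hprevlt : h - 1 < 2*(m+2) := by omega
    have hmod : (h - 1 + 1) % (2*(m+2)) = h := by
      rw [show h - 1 + 1 = h by omega]; exact Nat.mod_eq_of_lt hh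
    obtain ⟨hR1, hμ1⟩ := edge_basic m R μ i j σ hμi hμj he hp (h-1) hprevlt
    have hd1 := hdir _ hR1 hμ1
    have hBi1 : σ (eScope m i j (h-1) i) = σ (nodeV m r (h-1)) := by rw [eScope_i]
    have hBj1 : σ (eScope m i j (h-1) j) = σ (nodeV m r h) := by
      rw [eScope_j m i j hij, hmod]
    cases hflip : flip
    · -- implication case
      rw [hflip] at hd1
      simp only [if_neg (by simp : ¬ (false = true))] at hd1
      rw [Bool.xor_false]
      cases hval : val
      · -- val = false : use the outgoing edge of h
        have hnextlt : (h+1) % (2*(m+2)) < 2*(m+2) := Nat.mod_lt _ (by omega)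
        have hnext2 : ((h+1) % (2*(m+2))) % 2 = 0 := by
          rw [Nat.mod_mod_of_dvd _ ⟨m+2, rfl⟩]; omega
        have hnextval : σ (nodeV m r ((h+1) % (2*(m+2)))) = false := by
          rw [heven _ hnextlt hnext2, hval]
        obtain ⟨hR2, hμ2⟩ := edge_basic m R μ i j σ hμi hμj he hp h hh
        have hd2 := hdir _ hR2 hμ2
        rw [hflip] at hd2
        simp only [if_neg (by simp : ¬ (false = true))] at hd2
        by_contra hcon
        have hT : σ (nodeV m r h) = true := by
          cases hσh : σ (nodeV m r h)
          · exact absurd hσh hcon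
          · rfl
        have : σ (eScope m i j h i) = true := by rw [eScope_i]; exact hT
        have h2' := hd2 this
        rw [eScope_j m i j hij] at h2'
        rw [h2'] at hnextval
        cases hnextval
      · -- val = true : use the incoming edge
        have hprevval : σ (nodeV m r (h-1)) = true := by
          rw [heven _ hprevlt hprev2, hval]
        have := hd1 (by rw [hBi1]; exact hprevval)
        rw [hBj1] at this
        rw [this]
    · -- negation case
      rw [hflip] at hd1
      simp only [if_pos rfl] at hd1
      rw [hBi1, hBj1] at hd1
      rw [hd1, heven _ hprevlt hprev2]
      cases val <;> rfl

/-- A satisfying assignment with designated pattern `val` is the canonical one. -/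
lemma sat_unique (σ : Fin (LL m r) → Bool) (val : Bool)
    (hij : i ≠ j) (hμi : μ i = none) (hμj : μ j = none)
    (hdir : ∀ b, b ∈ R → b ∈ cube μ →
      (if flip then b j = !(b i) else (b i = true → b j = true)))
    (hu₀ : ∀ y, y ∈ R → y ∈ cube μ → y i = false ∧ y j = flip → y = b₀)
    (hu₁ : ∀ y, y ∈ R → y ∈ cube μ → y i = true ∧ y j = !flip → y = b₁)
    (hsat : (inst m R μ i j).sat σ)
    (hpat : ∀ v : Fin (LL m r), v.val < m+2 → σ v = val) :
    σ = sigval m i j flip b₀ b₁ val := by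
  have hnode := node_values m R μ i j flip σ val hij hμi hμj hdir hsat hpat
  rw [sat_iff] at hsat
  obtain ⟨he, hp⟩ := hsat
  have htup : ∀ g, g < 2*(m+2) →
      (fun t => σ (eScope m i j g t)) = bE flip b₀ b₁ val g := by
    intro g hg
    obtain ⟨hR1, hμ1⟩ := edge_basic m R μ i j σ hμi hμj he hp g hg
    have hBi : σ (eScope m i j g i) = nvalB flip val g := by
      rw [eScope_i]; exact hnode g hg
    have hBj : σ (eScope m i j g j) = xor (nvalB flip val g) flip := by
      rw [eScope_j m i j hij, hnode _ (Nat.mod_lt _ (by omega)), nval_next]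
    cases hnv : nvalB flip val g
    · rw [hnv] at hBi hBj
      rw [bE_eq_b0 flip b₀ b₁ val g hnv]
      exact hu₀ _ hR1 hμ1 ⟨hBi, by rw [hBj]; cases flip <;> rfl⟩
    · rw [hnv] at hBi hBj
      rw [bE_eq_b1 flip b₀ b₁ val g hnv]
      exact hu₁ _ hR1 hμ1 ⟨hBi, by rw [hBj]; cases flip <;> rfl⟩
  funext n
  by_cases h1 : n.val < m+2
  · rw [hpat n h1, sigval_low m i j flip b₀ b₁ val n h1]
  · by_cases h2 : n.val < 2*(m+2)
    · have hhK : 2*(n.val - (m+2)) + 1 < 2*(m+2) := by omega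
      have hodd : (2*(n.val - (m+2)) + 1) % 2 = 1 := by omega
      have hidx : nodeIdx m (2*(n.val - (m+2)) + 1) = n.val := by
        unfold nodeIdx; rw [if_neg (by omega)]; omega
      have hnV : nodeV m r (2*(n.val - (m+2)) + 1) = n := by
        apply Fin.ext; rw [nodeV_val m r hhK, hidx]
      rw [← hnV, hnode _ hhK, sigval_node m i j flip b₀ b₁ val hhK]
    · have hq : n.val - 2*(m+2) < 2*(m+2)*r := by
        have := n.isLt; unfold LL at this; omega
      have hg : (n.val - 2*(m+2)) / r < 2*(m+2) :=
        (Nat.div_lt_iff_lt_mul i.pos).mpr (by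
          calc n.val - 2*(m+2) < 2*(m+2)*r := hq
          _ = 2*(m+2)*r := rfl)
      set g := (n.val - 2*(m+2)) / r with hgdef
      set t : Fin r := ⟨(n.val - 2*(m+2)) % r, Nat.mod_lt _ i.pos⟩ with htdef
      have hnw : wV m r g t = n := by
        apply Fin.ext
        rw [wV_val m hg t]
        show 2*(m+2) + (r * g + ((n.val - 2*(m+2)) % r)) = n.val
        have hdm : r * g + (n.val - 2*(m+2)) % r = n.val - 2*(m+2) := by
          rw [hgdef]; exact Nat.div_add_mod _ _
        have hge : ¬ n.val < 2*(m+2) := h2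
        omega
      by_cases hcase : t = i ∨ t = j
      · have hpin := hp g hg t false (by unfold pinVal; rw [if_pos hcase])
        rw [← hnw, hpin, sigval_w m i j flip b₀ b₁ val hg t, if_pos hcase]
      · have hsc : eScope m i j g t = wV m r g t :=
          eScope_other m i j (fun h => hcase (Or.inl h)) (fun h => hcase (Or.inr h)) g
        have hBt : σ (wV m r g t) = bE flip b₀ b₁ val g t := by
          rw [← hsc]; exact congrFun (htup g hg) t
        rw [← hnw, hBt, sigval_w m i j flip b₀ b₁ val hg t, if_neg hcase]

end Gadget4

end SimEqAux

namespace SimEqAux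

section Gadget5

variable {r : ℕ} (m : ℕ) (R : BoolRel r) (μ : Fin r → Option Bool) (i j : Fin r)
  (flip : Bool)

lemma designated_node (v : Fin (LL m r)) (hv : v.val < m+2) :
    nodeV m r (2*v.val) = v := by
  apply Fin.ext
  rw [nodeV_val m r (by omega)]
  unfold nodeIdx
  rw [if_pos (by omega)]
  omega

lemma sat_dichotomy (σ : Fin (LL m r) → Bool)
    (hij : i ≠ j) (hμi : μ i = none) (hμj : μ j = none)
    (hdir : ∀ b, b ∈ R → b ∈ cube μ →
      (if flip then b j = !(b i) else (b i = true → b j = true)))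
    (hsat : (inst m R μ i j).sat σ) :
    (∀ v : Fin (LL m r), v.val < m+2 → σ v = false) ∨
    (∀ v : Fin (LL m r), v.val < m+2 → σ v = true) := by
  rw [sat_iff] at hsat
  obtain ⟨he, hp⟩ := hsat
  have hKpos : 0 < 2*(m+2) := by omega
  have hconst : ∀ u v : Fin (LL m r), u.val < m+2 → v.val < m+2 → σ u = σ v := by
    have hgen : ∀ u v : Fin (LL m r), u.val < m+2 → v.val < m+2 →
        σ u = true → σ v = true := by
      intro u v hu hv huT
      cases hflip : flip
      · -- implications: propagate "true" around the cycle
        have hstep : ∀ g, g < 2*(m+2) → σ (nodeV m r g) = true →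
            σ (nodeV m r ((g+1) % (2*(m+2)))) = true := by
          intro g hg hT
          obtain ⟨hR1, hμ1⟩ := edge_basic m R μ i j σ hμi hμj he hp g hg
          have hd := hdir _ hR1 hμ1
          rw [hflip] at hd
          simp only [if_neg (by simp : ¬ (false = true))] at hd
          have := hd (by rw [eScope_i]; exact hT)
          rw [eScope_j m i j hij] at this
          exact this
        have hprop : ∀ d g, g < 2*(m+2) → σ (nodeV m r g) = true →
            σ (nodeV m r ((g+d) % (2*(m+2)))) = true := by
          intro d
          induction d with
          | zero =>
            intro g hg hT
            rw [Nat.add_zero, Nat.mod_eq_of_lt hg]; exact hT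
          | succ d ihd =>
            intro g hg hT
            have h1 := ihd g hg hT
            have h2 := hstep ((g+d) % (2*(m+2))) (Nat.mod_lt _ hKpos) h1
            rw [Nat.mod_add_mod] at h2
            exact h2
        have h0 : σ (nodeV m r (2*u.val)) = true := by
          rw [designated_node m u hu]; exact huT
        have h1 := hprop (2*v.val + 2*(m+2) - 2*u.val) (2*u.val) (by omega) h0
        have h2 : (2*u.val + (2*v.val + 2*(m+2) - 2*u.val)) % (2*(m+2)) = 2*v.val := by
          rw [show 2*u.val + (2*v.val + 2*(m+2) - 2*u.val) = 2*v.val + 2*(m+2) by omega,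
            Nat.add_mod_right, Nat.mod_eq_of_lt (by omega)]
        rw [h2, designated_node m v hv] at h1
        exact h1
      · -- negations: values are parity-determined
        have hstep : ∀ g, g < 2*(m+2) →
            σ (nodeV m r ((g+1) % (2*(m+2)))) = !(σ (nodeV m r g)) := by
          intro g hg
          obtain ⟨hR1, hμ1⟩ := edge_basic m R μ i j σ hμi hμj he hp g hg
          have hd := hdir _ hR1 hμ1
          rw [hflip] at hd
          simp only [if_pos rfl] at hd
          rw [eScope_i, eScope_j m i j hij] at hd
          exact hd
        have hprop : ∀ d g, g < 2*(m+2) →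
            σ (nodeV m r ((g+d) % (2*(m+2)))) =
              xor (σ (nodeV m r g)) (decide (d % 2 = 1)) := by
          intro d
          induction d with
          | zero =>
            intro g hg
            rw [Nat.add_zero, Nat.mod_eq_of_lt hg]
            cases σ (nodeV m r g) <;> rfl
          | succ d ihd =>
            intro g hg
            have h1 := ihd g hg
            have h2 := hstep ((g+d) % (2*(m+2))) (Nat.mod_lt _ hKpos)
            rw [Nat.mod_add_mod, h1] at h2
            rw [← Nat.add_assoc, h2]
            rcases Nat.mod_two_eq_zero_or_one d with hd2 | hd2
            · rw [hd2, show (d+1) % 2 = 1 by omega]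
              cases σ (nodeV m r g) <;> rfl
            · rw [hd2, show (d+1) % 2 = 0 by omega]
              cases σ (nodeV m r g) <;> rfl
        have h0 : σ (nodeV m r (2*u.val)) = true := by
          rw [designated_node m u hu]; exact huT
        have h1 := hprop (2*v.val + 2*(m+2) - 2*u.val) (2*u.val) (by omega)
        have hdeven : (2*v.val + 2*(m+2) - 2*u.val) % 2 = 0 := by omega
        have h2 : (2*u.val + (2*v.val + 2*(m+2) - 2*u.val)) % (2*(m+2)) = 2*v.val := by
          rw [show 2*u.val + (2*v.val + 2*(m+2) - 2*u.val) = 2*v.val + 2*(m+2) by omega,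
            Nat.add_mod_right, Nat.mod_eq_of_lt (by omega)]
        rw [h2, designated_node m v hv, h0, hdeven] at h1
        rw [h1]; rfl
    intro u v hu hv
    cases hσu : σ u
    · cases hσv : σ v
      · rfl
      · rw [← hσu]; exact hgen v u hv hu hσv
    · exact (hgen u v hu hv hσu).symm
  have h0lt : (0 : ℕ) < LL m r := LL_pos m r
  cases hσ0 : σ ⟨0, h0lt⟩
  · left
    intro v hv
    rw [hconst v ⟨0, h0lt⟩ hv (by simp), hσ0]
  · right
    intro v hv
    rw [hconst v ⟨0, h0lt⟩ hv (by simp), hσ0]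

end Gadget5

end SimEqAux

namespace SimEqAux

def occ {V : Type} [DecidableEq V] (c : Constraint V) (v : V) : ℕ :=
  (Finset.univ.filter fun x => c.scope x = v).card

lemma list_range_map_sum (n : ℕ) (f : ℕ → ℕ) :
    ((List.range n).map f).sum = ∑ g ∈ Finset.range n, f g := by
  induction n with
  | zero => simp
  | succ n ih => rw [List.range_succ, Finset.sum_range_succ, List.map_append,
      List.sum_append, ih]; simp

lemma sum_map_flatMap {α β : Type*} (l : List α) (f : α → List β) (h : β → ℕ) :
    ((l.flatMap f).map h).sum = (l.map (fun x => ((f x).map h).sum)).sum := by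
  induction l with
  | nil => simp
  | cons a l ih => simp [ih]

section Gadget6

variable {r : ℕ} (m : ℕ) (R : BoolRel r) (μ : Fin r → Option Bool) (i j : Fin r)

lemma varDegree_inst (v : Fin (LL m r)) :
    varDegree (inst m R μ i j) v =
      (∑ g ∈ Finset.range (2*(m+2)), occ (edgeCon m R i j g) v) +
      ((pinsL m μ i j).map (fun c => occ c v)).sum := by
  show ((((List.range (2*(m+2))).map (edgeCon m R i j)) ++ pinsL m μ i j).map
      (fun c => (Finset.univ.filter fun x => c.scope x = v).card)).sum = _
  rw [List.map_append, List.sum_append, List.map_map, list_range_map_sum]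
  rfl

lemma eScope_w_ne (v : Fin (LL m r)) (hv : v.val < 2*(m+2)) {g : ℕ}
    (hg : g < 2*(m+2)) (t : Fin r) : wV m r g t ≠ v := by
  intro heq
  have := congrArg Fin.val heq
  rw [wV_val m hg t] at this
  unfold wIdx at this
  omega

lemma occ_edge_node (hij : i ≠ j) (v : Fin (LL m r)) (hv : v.val < 2*(m+2)) {g : ℕ}
    (hg : g < 2*(m+2)) :
    occ (edgeCon m R i j g) v ≤
      (if nodeV m r g = v then 1 else 0) +
      (if nodeV m r ((g+1) % (2*(m+2))) = v then 1 else 0) := by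
  unfold occ
  have hmem : ∀ t : Fin r, (edgeCon m R i j g).scope t = v →
      (t = i ∧ nodeV m r g = v) ∨ (t = j ∧ nodeV m r ((g+1) % (2*(m+2))) = v) := by
    intro t ht
    by_cases hti : t = i
    · left; refine ⟨hti, ?_⟩
      rw [← ht]
      show nodeV m r g = eScope m i j g t
      rw [hti, eScope_i]
    · by_cases htj : t = j
      · right; refine ⟨htj, ?_⟩
        rw [← ht]
        show _ = eScope m i j g t
        rw [htj, eScope_j m i j hij]
      · exfalso
        refine eScope_w_ne m v hv hg t ?_
        rw [← ht]
        show wV m r g t = eScope m i j g t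
        rw [eScope_other m i j hti htj]
  by_cases hc1 : nodeV m r g = v <;> by_cases hc2 : nodeV m r ((g+1) % (2*(m+2))) = v
  · rw [if_pos hc1, if_pos hc2]
    calc (Finset.univ.filter fun x => (edgeCon m R i j g).scope x = v).card
        ≤ ({i, j} : Finset (Fin r)).card := by
          apply Finset.card_le_card
          intro t ht
          rcases hmem t (Finset.mem_filter.mp ht).2 with ⟨h, -⟩ | ⟨h, -⟩
          · exact Finset.mem_insert.mpr (Or.inl h)
          · exact Finset.mem_insert.mpr (Or.inr (Finset.mem_singleton.mpr h))
      _ ≤ 2 := Finset.card_insert_le _ _ |>.trans (by simp)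
  · rw [if_pos hc1, if_neg hc2]
    have : (Finset.univ.filter fun x => (edgeCon m R i j g).scope x = v) ⊆ {i} := by
      intro t ht
      rcases hmem t (Finset.mem_filter.mp ht).2 with ⟨h, -⟩ | ⟨-, h⟩
      · exact Finset.mem_singleton.mpr h
      · exact absurd h hc2
    calc _ ≤ ({i} : Finset (Fin r)).card := Finset.card_le_card this
      _ = 1 := Finset.card_singleton i
  · rw [if_neg hc1, if_pos hc2]
    have : (Finset.univ.filter fun x => (edgeCon m R i j g).scope x = v) ⊆ {j} := by
      intro t ht
      rcases hmem t (Finset.mem_filter.mp ht).2 with ⟨-, h⟩ | ⟨h, -⟩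
      · exact absurd h hc1
      · exact Finset.mem_singleton.mpr h
    calc _ ≤ ({j} : Finset (Fin r)).card := Finset.card_le_card this
      _ = 1 := Finset.card_singleton j
  · rw [if_neg hc1, if_neg hc2]
    have : (Finset.univ.filter fun x => (edgeCon m R i j g).scope x = v) = ∅ := by
      rw [Finset.eq_empty_iff_forall_notMem]
      intro t ht
      rcases hmem t (Finset.mem_filter.mp ht).2 with ⟨-, h⟩ | ⟨-, h⟩
      · exact hc1 h
      · exact hc2 h
    rw [this]; simp

lemma node_ne_w (v : Fin (LL m r)) (hv : 2*(m+2) ≤ v.val) {h : ℕ} (hh : h < 2*(m+2)) :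
    nodeV m r h ≠ v := by
  intro heq
  have := congrArg Fin.val heq
  rw [nodeV_val m r hh] at this
  have := nodeIdx_lt m hh
  omega

lemma occ_edge_w (hij : i ≠ j) (v : Fin (LL m r)) (hv : 2*(m+2) ≤ v.val) {g : ℕ}
    (hg : g < 2*(m+2)) :
    occ (edgeCon m R i j g) v ≤ if (v.val - 2*(m+2)) / r = g then 1 else 0 := by
  unfold occ
  have hmem : ∀ t : Fin r, (edgeCon m R i j g).scope t = v →
      wV m r g t = v := by
    intro t ht
    by_cases hti : t = i
    · exfalso
      refine node_ne_w m v hv hg ?_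
      rw [← ht]; show nodeV m r g = eScope m i j g t; rw [hti, eScope_i]
    · by_cases htj : t = j
      · exfalso
        have hnn : nodeV m r ((g+1) % (2*(m+2))) = v := by
          rw [← ht]; show _ = eScope m i j g t; rw [htj, eScope_j m i j hij]
        exact node_ne_w m v hv (Nat.mod_lt _ (by omega)) hnn
      · rw [← ht]; show wV m r g t = eScope m i j g t
        rw [eScope_other m i j hti htj]
  have hval : ∀ t : Fin r, wV m r g t = v →
      (v.val - 2*(m+2)) / r = g ∧ (v.val - 2*(m+2)) % r = t.val := by
    intro t heq
    have hV := congrArg Fin.val heq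
    rw [wV_val m hg t] at hV
    rw [← hV]
    exact wIdx_decompose i.pos t.isLt
  by_cases hc : (v.val - 2*(m+2)) / r = g
  · rw [if_pos hc]
    have : (Finset.univ.filter fun x => (edgeCon m R i j g).scope x = v) ⊆
        {(⟨(v.val - 2*(m+2)) % r, Nat.mod_lt _ i.pos⟩ : Fin r)} := by
      intro t ht
      have hw := hmem t (Finset.mem_filter.mp ht).2
      have := (hval t hw).2
      exact Finset.mem_singleton.mpr (Fin.ext this.symm)
    calc _ ≤ _ := Finset.card_le_card this
      _ = 1 := Finset.card_singleton _
  · rw [if_neg hc]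
    have : (Finset.univ.filter fun x => (edgeCon m R i j g).scope x = v) = ∅ := by
      rw [Finset.eq_empty_iff_forall_notMem]
      intro t ht
      exact hc (hval t (hmem t (Finset.mem_filter.mp ht).2)).1
    rw [this]; simp

lemma occ_pinCon (c : Bool) (g : ℕ) (t : Fin r) (v : Fin (LL m r)) :
    occ (pinCon m c g t) v = if wV m r g t = v then 1 else 0 := by
  unfold occ pinCon
  by_cases h : wV m r g t = v
  · rw [if_pos h]
    show (Finset.univ.filter fun _ : Fin 1 => wV m r g t = v).card = 1
    rw [Finset.filter_true_of_mem (fun _ _ => h)]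
    simp
  · rw [if_neg h]
    show (Finset.univ.filter fun _ : Fin 1 => wV m r g t = v).card = 0
    rw [Finset.filter_false_of_mem (fun _ _ => h)]
    simp

lemma pins_sum_eq (v : Fin (LL m r)) :
    ((pinsL m μ i j).map (fun c => occ c v)).sum =
      ∑ g ∈ Finset.range (2*(m+2)), ∑ t : Fin r,
        (((pinVal μ i j t).map (fun c => pinCon m c g t)).toList.map
          (fun c => occ c v)).sum := by
  unfold pinsL
  rw [sum_map_flatMap, list_range_map_sum]
  apply Finset.sum_congr rfl
  intro g _
  rw [sum_map_flatMap, ← Fin.sum_univ_def]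

lemma pin_inner_le (g : ℕ) (t : Fin r) (v : Fin (LL m r)) :
    (((pinVal μ i j t).map (fun c => pinCon m c g t)).toList.map
      (fun c => occ c v)).sum ≤ if wV m r g t = v then 1 else 0 := by
  cases hpv : pinVal μ i j t
  · simp
  · simp only [Option.map_some, Option.toList_some, List.map_cons, List.map_nil,
      List.sum_cons, List.sum_nil, Nat.add_zero]
    rw [occ_pinCon]

lemma sum_ite_eq_le {α : Type*} [DecidableEq α] (s : Finset α) (b : α) :
    (∑ a ∈ s, if b = a then 1 else 0) ≤ 1 := by
  rw [Finset.sum_ite_eq s b (fun _ => 1)]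
  split <;> omega

lemma pins_sum_le_w (v : Fin (LL m r)) (hv : 2*(m+2) ≤ v.val) :
    ((pinsL m μ i j).map (fun c => occ c v)).sum ≤ 1 := by
  rw [pins_sum_eq]
  calc (∑ g ∈ Finset.range (2*(m+2)), ∑ t : Fin r,
        (((pinVal μ i j t).map (fun c => pinCon m c g t)).toList.map
          (fun c => occ c v)).sum)
      ≤ ∑ g ∈ Finset.range (2*(m+2)),
          (if (v.val - 2*(m+2)) / r = g then 1 else 0) := by
        apply Finset.sum_le_sum
        intro g hg
        have hg' : g < 2*(m+2) := Finset.mem_range.mp hg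
        by_cases hc : (v.val - 2*(m+2)) / r = g
        · rw [if_pos hc]
          calc (∑ t : Fin r, (((pinVal μ i j t).map (fun c => pinCon m c g t)).toList.map
                (fun c => occ c v)).sum)
              ≤ ∑ t : Fin r, (if wV m r g t = v then 1 else 0) :=
                Finset.sum_le_sum (fun t _ => pin_inner_le m μ i j g t v)
            _ = (Finset.univ.filter fun t : Fin r => wV m r g t = v).card := by
                rw [Finset.sum_boole]; simp
            _ ≤ 1 := by
                apply Finset.card_le_one.mpr
                intro a ha b hb
                have ha' := (Finset.mem_filter.mp ha).2
                have hb' := (Finset.mem_filter.mp hb).2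
                have h1 := congrArg Fin.val (ha'.trans hb'.symm)
                rw [wV_val m hg' a, wV_val m hg' b] at h1
                unfold wIdx at h1
                exact Fin.ext (by omega)
        · rw [if_neg hc]
          have : ∀ t : Fin r, (((pinVal μ i j t).map (fun c => pinCon m c g t)).toList.map
              (fun c => occ c v)).sum = 0 := by
            intro t
            refine Nat.le_zero.mp ((pin_inner_le m μ i j g t v).trans ?_)
            rw [if_neg ?_]
            intro heq
            have hV := congrArg Fin.val heq
            rw [wV_val m hg' t] at hV
            refine hc ?_
            rw [← hV]
            exact (wIdx_decompose i.pos t.isLt).1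
          rw [Finset.sum_congr rfl (fun t _ => this t)]
          simp
    _ ≤ 1 := sum_ite_eq_le _ _
  
lemma pins_sum_zero (v : Fin (LL m r)) (hv : v.val < 2*(m+2)) :
    ((pinsL m μ i j).map (fun c => occ c v)).sum = 0 := by
  rw [pins_sum_eq]
  apply Finset.sum_eq_zero
  intro g hg
  apply Finset.sum_eq_zero
  intro t _
  refine Nat.le_zero.mp ((pin_inner_le m μ i j g t v).trans ?_)
  rw [if_neg (eScope_w_ne m v hv (Finset.mem_range.mp hg) t)]

lemma nodeV_injOn {h h' : ℕ} (hh : h < 2*(m+2)) (hh' : h' < 2*(m+2))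
    (he : nodeV m r h = nodeV m r h') : h = h' := by
  have := congrArg Fin.val he
  rw [nodeV_val m r hh, nodeV_val m r hh'] at this
  exact nodeIdx_inj m hh hh' this

lemma varDegree_le_two (hij : i ≠ j) (v : Fin (LL m r)) :
    varDegree (inst m R μ i j) v ≤ 2 := by
  rw [varDegree_inst]
  by_cases hv : v.val < 2*(m+2)
  · rw [pins_sum_zero m μ i j v hv, Nat.add_zero]
    calc (∑ g ∈ Finset.range (2*(m+2)), occ (edgeCon m R i j g) v)
        ≤ ∑ g ∈ Finset.range (2*(m+2)),
            ((if nodeV m r g = v then 1 else 0) +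
             (if nodeV m r ((g+1) % (2*(m+2))) = v then 1 else 0)) :=
          Finset.sum_le_sum (fun g hg =>
            occ_edge_node m R i j hij v hv (Finset.mem_range.mp hg))
      _ = (∑ g ∈ Finset.range (2*(m+2)), if nodeV m r g = v then 1 else 0) +
          (∑ g ∈ Finset.range (2*(m+2)),
            if nodeV m r ((g+1) % (2*(m+2))) = v then 1 else 0) :=
          Finset.sum_add_distrib
      _ ≤ 1 + 1 := by
          gcongr
          · rw [Finset.sum_boole]
            norm_cast
            apply Finset.card_le_one.mpr
            intro a ha b hb
            have ha' := (Finset.mem_filter.mp ha).2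
            have hb' := (Finset.mem_filter.mp hb).2
            exact nodeV_injOn m (Finset.mem_range.mp (Finset.mem_filter.mp ha).1)
              (Finset.mem_range.mp (Finset.mem_filter.mp hb).1) (ha'.trans hb'.symm)
          · rw [Finset.sum_boole]
            norm_cast
            apply Finset.card_le_one.mpr
            intro a ha b hb
            have ha1 := Finset.mem_range.mp (Finset.mem_filter.mp ha).1
            have hb1 := Finset.mem_range.mp (Finset.mem_filter.mp hb).1
            have ha' := (Finset.mem_filter.mp ha).2
            have hb' := (Finset.mem_filter.mp hb).2
            have heq := nodeV_injOn m (Nat.mod_lt _ (by omega)) (Nat.mod_lt _ (by omega))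
              (ha'.trans hb'.symm)
            have hfa : ∀ x, x < 2*(m+2) → (x+1) % (2*(m+2)) = if x+1 = 2*(m+2) then 0 else x+1 := by
              intro x hx
              split
              · rename_i hxx; rw [hxx, Nat.mod_self]
              · rename_i hxx; exact Nat.mod_eq_of_lt (by omega)
            rw [hfa a ha1, hfa b hb1] at heq
            split at heq <;> split at heq <;> omega
      _ = 2 := rfl
  · push_neg at hv
    have h1 : (∑ g ∈ Finset.range (2*(m+2)), occ (edgeCon m R i j g) v) ≤ 1 := by
      calc (∑ g ∈ Finset.range (2*(m+2)), occ (edgeCon m R i j g) v)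
          ≤ ∑ g ∈ Finset.range (2*(m+2)),
              (if (v.val - 2*(m+2)) / r = g then 1 else 0) :=
            Finset.sum_le_sum (fun g hg =>
              occ_edge_w m R i j hij v hv (Finset.mem_range.mp hg))
        _ ≤ 1 := sum_ite_eq_le _ _
    have h2 := pins_sum_le_w m μ i j v hv
    omega

end Gadget6

end SimEqAux

namespace SimEqAux

lemma main_gadget {r : ℕ} {R : BoolRel r} {μ : Fin r → Option Bool} {i j : Fin r}
    {flip : Bool} (hgp : GoodPins R μ i j flip) (m : ℕ) :
    simulatesEqK {⟨r, R⟩} 3 (m+2) := by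
  obtain ⟨hij, hμi, hμj, hdir, hU0, hU1⟩ := hgp
  obtain ⟨b₀, ⟨hb₀R, hb₀μ, hb₀i, hb₀j⟩, hu₀⟩ := hU0
  obtain ⟨b₁, ⟨hb₁R, hb₁μ, hb₁i, hb₁j⟩, hu₁⟩ := hU1
  refine ⟨LL m r, le_trans (by omega) (le_LL m r), inst m R μ i j, ?_, ?_, ?_,
    1, le_refl 1, ?_, ?_, ?_⟩
  · -- language
    intro c hc
    rcases List.mem_append.mp hc with hce | hcp
    · obtain ⟨g, hg, rfl⟩ := List.mem_map.mp hce
      exact Or.inl rfl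
    · unfold pinsL at hcp
      obtain ⟨g, hg, hcp2⟩ := List.mem_flatMap.mp hcp
      obtain ⟨t, -, hcp3⟩ := List.mem_flatMap.mp hcp2
      cases hpv : pinVal μ i j t with
      | none => rw [hpv] at hcp3; simp at hcp3
      | some cv =>
        rw [hpv] at hcp3
        simp only [Option.map_some, Option.toList_some, List.mem_singleton] at hcp3
        subst hcp3
        refine Or.inr ?_
        cases cv
        · exact Or.inl rfl
        · exact Or.inr rfl
  · intro v
    exact le_trans (varDegree_le_two m R μ i j hij v) (by omega)
  · intro v _
    exact varDegree_le_two m R μ i j hij v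
  · have hset : {σ : Fin (LL m r) → Bool | (inst m R μ i j).sat σ ∧
        ∀ v : Fin (LL m r), (v : ℕ) < m+2 → σ v = false}
        = {sigval m i j flip b₀ b₁ false} := by
      ext σ
      constructor
      · rintro ⟨hs, hk⟩
        exact sat_unique m R μ i j flip b₀ b₁ σ false hij hμi hμj hdir
          (fun y hy1 hy2 hy3 => hu₀ y ⟨hy1, hy2, hy3.1, hy3.2⟩)
          (fun y hy1 hy2 hy3 => hu₁ y ⟨hy1, hy2, hy3.1, hy3.2⟩) hs hk
      · rintro rfl
        refine ⟨sat_canonical m R μ i j flip b₀ b₁ false hij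
          hb₀R hb₀μ hb₀i hb₀j hb₁R hb₁μ hb₁i hb₁j, ?_⟩
        intro v hv
        exact sigval_low m i j flip b₀ b₁ false v hv
    rw [hset, Nat.card_coe_set_eq, Set.ncard_singleton]
  · have hset : {σ : Fin (LL m r) → Bool | (inst m R μ i j).sat σ ∧
        ∀ v : Fin (LL m r), (v : ℕ) < m+2 → σ v = true}
        = {sigval m i j flip b₀ b₁ true} := by
      ext σ
      constructor
      · rintro ⟨hs, hk⟩
        exact sat_unique m R μ i j flip b₀ b₁ σ true hij hμi hμj hdir
          (fun y hy1 hy2 hy3 => hu₀ y ⟨hy1, hy2, hy3.1, hy3.2⟩)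
          (fun y hy1 hy2 hy3 => hu₁ y ⟨hy1, hy2, hy3.1, hy3.2⟩) hs hk
      · rintro rfl
        refine ⟨sat_canonical m R μ i j flip b₀ b₁ true hij
          hb₀R hb₀μ hb₀i hb₀j hb₁R hb₁μ hb₁i hb₁j, ?_⟩
        intro v hv
        exact sigval_low m i j flip b₀ b₁ true v hv
    rw [hset, Nat.card_coe_set_eq, Set.ncard_singleton]
  · intro σ hs
    exact sat_dichotomy m R μ i j flip σ hij hμi hμj hdir hs

end SimEqAux


/-- If `R₌ ≤ppp R`, or `R₍≠₎ ≤ppp R`, or `R₍→₎ ≤ppp R`, then `R` 3-simulates equality. -/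
theorem simulates_equality_of_ppp_eq_neq_imp (r : ℕ) (R : BoolRel r)
    (h : pppLE Req R ∨ pppLE Rneq R ∨ pppLE Rimp R) :
    relSimulatesEq R 3 := by
  intro k hk
  obtain ⟨m, rfl⟩ : ∃ m, k = m + 2 := ⟨k - 2, by omega⟩
  rcases h with h | h | h
  · obtain ⟨μ, i, j, hgp⟩ := SimEqAux.goodPins_of_req h
    exact SimEqAux.main_gadget hgp m
  · obtain ⟨μ, i, j, hgp⟩ := SimEqAux.goodPins_of_rneq h
    exact SimEqAux.main_gadget hgp m
  · obtain ⟨μ, i, j, hgp⟩ := SimEqAux.goodPins_of_rimp h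
    exact SimEqAux.main_gadget hgp m
end

section
/- Let r ≥ 2 and let R ⊆ {0,1}^r be a Boolean relation that contains both the all-zeros tuple 0^r and the all-ones tuple 1^r (i.e., R is 0-valid and 1-valid) but is not the complete relation {0,1}^r. Then R 3-simulates equality. -/
/- ### Auxiliary development for the proof ### -/

namespace EqSim

/-- The set of tuples of `R` matching value `b₁` at `i₁`, `b₀` at `i₀`, and pinned by `π` on `F`. -/
def NSet {r : ℕ} (R : BoolRel r) (i₁ i₀ : Fin r) (F : Finset (Fin r)) (π : Fin r → Bool)
    (b₁ b₀ : Bool) : Set (Fin r → Bool) :=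
  {a | a ∈ R ∧ a i₁ = b₁ ∧ a i₀ = b₀ ∧ ∀ i ∈ F, a i = π i}

/-- Key combinatorial property: a "balanced implication gadget" inside `R`. -/
def HasP {r : ℕ} (R : BoolRel r) : Prop :=
  ∃ (i₁ i₀ : Fin r) (F : Finset (Fin r)) (π : Fin r → Bool),
    i₁ ≠ i₀ ∧ i₁ ∉ F ∧ i₀ ∉ F ∧
    NSet R i₁ i₀ F π true false = ∅ ∧
    Nat.card (NSet R i₁ i₀ F π false false) = Nat.card (NSet R i₁ i₀ F π true true) ∧
    (NSet R i₁ i₀ F π false false).Nonempty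

lemma card_singleton_set {α : Type*} (s : Set α) (x : α) (h : s = {x}) : Nat.card s = 1 := by
  subst h; simp

lemma nonempty_of_card_eq {α β : Type*} [Finite α] {s : Set α} {t : Set β}
    (h : Nat.card s = Nat.card t) (hs : s.Nonempty) : t.Nonempty := by
  rcases Set.eq_empty_or_nonempty t with h' | h'
  · subst h'
    have : Nat.card s = 0 := by simpa using h
    have hpos : 0 < Nat.card s := by
      have : Nonempty s := hs.to_subtype
      exact Nat.card_pos
    omega
  · exact h'

/-- weight (number of `true` coordinates) -/
def wt {r : ℕ} (a : Fin r → Bool) : ℕ := (Finset.univ.filter fun i => a i = true).card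

/-- Case 1: all elements of `R` are constant. -/
lemma hasP_of_allconst {r : ℕ} (hr : 2 ≤ r) (R : BoolRel r)
    (h0 : (fun _ => false) ∈ R) (h1 : (fun _ => true) ∈ R)
    (hall : ∀ a ∈ R, a = (fun _ => false) ∨ a = (fun _ => true)) : HasP R := by
  have h01 : (⟨0, by omega⟩ : Fin r) ≠ ⟨1, by omega⟩ := by
    intro h
    have := congrArg Fin.val h
    simp at this
  refine ⟨⟨0, by omega⟩, ⟨1, by omega⟩, ∅, fun _ => false, h01, by simp, by simp, ?_, ?_, ?_⟩
  · ext a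
    simp only [NSet, Set.mem_setOf_eq, Set.mem_empty_iff_false, iff_false, not_and]
    intro haR h1' h0'
    rcases hall a haR with rfl | rfl <;> simp_all
  · rw [card_singleton_set _ (fun _ => false), card_singleton_set _ (fun _ => true)]
    · ext a
      constructor
      · rintro ⟨haR, ha1, ha0, -⟩
        rcases hall a haR with rfl | rfl
        · simp_all
        · rfl
      · rintro rfl
        exact ⟨h1, rfl, rfl, by simp⟩
    · ext a
      constructor
      · rintro ⟨haR, ha1, ha0, -⟩
        rcases hall a haR with rfl | rfl
        · rfl
        · simp_all
      · rintro rfl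
        exact ⟨h0, rfl, rfl, by simp⟩
  · exact ⟨fun _ => false, h0, rfl, rfl, by simp⟩

end EqSim
namespace EqSim

/-- If `a` agrees in support with a minimal-weight nonconstant element, it equals it. -/
lemma eq_min {r : ℕ} (R : BoolRel r) (v : Fin r → Bool) (hvR : v ∈ R)
    (hmin : ∀ a ∈ R, ((∃ i, a i = true) ∧ (∃ i, a i = false)) → wt v ≤ wt a)
    (a : Fin r → Bool) (haR : a ∈ R) (hat : ∃ i, a i = true) (haf : ∃ i, a i = false)
    (hsub : ∀ i, v i = false → a i = false) : a = v := by
  have hsupp : (Finset.univ.filter fun i => a i = true) ⊆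
      (Finset.univ.filter fun i => v i = true) := by
    intro i hi
    simp only [Finset.mem_filter, Finset.mem_univ, true_and] at hi ⊢
    by_contra hv
    have hv' : v i = false := by simpa using hv
    rw [hsub i hv'] at hi
    exact absurd hi (by simp)
  have hcard : wt v ≤ wt a := hmin a haR ⟨hat, haf⟩
  have heq : (Finset.univ.filter fun i => a i = true) =
      (Finset.univ.filter fun i => v i = true) :=
    Finset.eq_of_subset_of_card_le hsupp hcard
  funext i
  by_cases hv : v i = true
  · have : i ∈ (Finset.univ.filter fun i => v i = true) := by simp [hv]
    rw [← heq] at this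
    simp only [Finset.mem_filter, Finset.mem_univ, true_and] at this
    rw [this, hv]
  · have hv' : v i = false := by simpa using hv
    rw [hsub i hv', hv']

/-- Case 2: the minimal-weight nonconstant element has weight ≥ 2. -/
lemma hasP_of_min {r : ℕ} (R : BoolRel r) (h0 : (fun _ => false) ∈ R)
    (v : Fin r → Bool) (hvR : v ∈ R) (hvt : ∃ i, v i = true) (hvf : ∃ i, v i = false)
    (hmin : ∀ a ∈ R, ((∃ i, a i = true) ∧ (∃ i, a i = false)) → wt v ≤ wt a)
    (h2 : 2 ≤ wt v) : HasP R := by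
  obtain ⟨i₁, hi₁, i₀, hi₀, hne⟩ := Finset.one_lt_card.mp (by omega : 1 < wt v)
  simp only [Finset.mem_filter, Finset.mem_univ, true_and] at hi₁ hi₀
  obtain ⟨iz, hiz⟩ := hvf
  refine ⟨i₁, i₀, Finset.univ.filter (fun i => v i = false), fun _ => false, hne,
    by simp [hi₁], by simp [hi₀], ?_, ?_, ?_⟩
  · ext a
    simp only [NSet, Set.mem_setOf_eq, Set.mem_empty_iff_false, iff_false, not_and]
    intro haR ha1 ha0 hpin
    have hsub : ∀ i, v i = false → a i = false := by
      intro i hvi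
      exact hpin i (by simp [hvi])
    have : a = v := eq_min R v hvR hmin a haR ⟨i₁, ha1⟩ ⟨i₀, ha0⟩ hsub
    rw [this, hi₀] at ha0
    exact absurd ha0 (by simp)
  · rw [card_singleton_set _ (fun _ => false) ?h1, card_singleton_set _ v ?h2]
    case h1 =>
      ext a
      constructor
      · rintro ⟨haR, ha1, ha0, hpin⟩
        have hsub : ∀ i, v i = false → a i = false := fun i hvi => hpin i (by simp [hvi])
        by_cases hat : ∃ i, a i = true
        · have heq : a = v := eq_min R v hvR hmin a haR hat ⟨i₁, ha1⟩ hsub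
          rw [heq, hi₁] at ha1
          exact absurd ha1 (by simp)
        · push_neg at hat
          funext i
          simpa using hat i
      · rintro rfl
        exact ⟨h0, rfl, rfl, fun i _ => rfl⟩
    case h2 =>
      ext a
      constructor
      · rintro ⟨haR, ha1, ha0, hpin⟩
        have hsub : ∀ i, v i = false → a i = false := fun i hvi => hpin i (by simp [hvi])
        have haf : ∃ i, a i = false := ⟨iz, hsub iz hiz⟩
        exact eq_min R v hvR hmin a haR ⟨i₁, ha1⟩ haf hsub
      · rintro rfl
        refine ⟨hvR, hi₁, hi₀, fun i hi => ?_⟩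
        simp only [Finset.mem_filter, Finset.mem_univ, true_and] at hi
        rw [hi]
  · refine ⟨fun _ => false, h0, rfl, rfl, fun i _ => rfl⟩

/-- Transfer of `HasP` along bitwise complement. -/
lemma hasP_of_bwcomp {r : ℕ} (R : BoolRel r) (h : HasP (bwcomp R)) : HasP R := by
  obtain ⟨i₁, i₀, F, π, hne, h1F, h0F, hemp, hcard, hne0⟩ := h
  have mem_iff : ∀ (b₁ b₀ : Bool) (a : Fin r → Bool),
      a ∈ NSet R i₀ i₁ F (fun i => !(π i)) (!b₀) (!b₁) ↔
      (fun i => !(a i)) ∈ NSet (bwcomp R) i₁ i₀ F π b₁ b₀ := by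
    intro b₁ b₀ a
    constructor
    · rintro ⟨haR, ha1, ha0, hpin⟩
      refine ⟨?_, by simp [ha0], by simp [ha1], fun i hi => ?_⟩
      · show (fun i => !(!(a i))) ∈ R
        simp only [Bool.not_not]
        exact haR
      · have := hpin i hi
        simp only at this ⊢
        simp [this]
    · rintro ⟨haR, ha1, ha0, hpin⟩
      simp only at ha1 ha0
      have haR' : a ∈ R := by
        have h' : (fun i => !((fun i => !(a i)) i)) ∈ R := haR
        simpa only [Bool.not_not] using h'
      refine ⟨haR', ?_, ?_, fun i hi => ?_⟩
      · rw [← ha0]; simp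
      · rw [← ha1]; simp
      · have := hpin i hi
        simp only at this ⊢
        rw [← this]; simp
  have cardEq : ∀ (b₁ b₀ : Bool),
      Nat.card (NSet R i₀ i₁ F (fun i => !(π i)) (!b₀) (!b₁)) =
      Nat.card (NSet (bwcomp R) i₁ i₀ F π b₁ b₀) := by
    intro b₁ b₀
    apply Nat.card_congr
    refine ⟨fun a => ⟨fun i => !(a.1 i), (mem_iff b₁ b₀ a.1).mp a.2⟩,
      fun a => ⟨fun i => !(a.1 i), ?_⟩, fun a => ?_, fun a => ?_⟩
    · apply (mem_iff b₁ b₀ _).mpr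
      have h' : (fun i => !(!(a.1 i))) = a.1 := by funext i; simp
      rw [h']
      exact a.2
    · ext i; simp
    · ext i; simp
  refine ⟨i₀, i₁, F, fun i => !(π i), hne.symm, h0F, h1F, ?_, ?_, ?_⟩
  · ext a
    simp only [Set.mem_empty_iff_false, iff_false]
    intro ha
    have h' := (mem_iff true false a).mp (by simpa using ha)
    rw [hemp] at h'
    exact h'
  · have e1 := cardEq true true
    have e2 := cardEq false false
    simp only [Bool.not_true, Bool.not_false] at e1 e2
    rw [e2, e1, hcard]
  · have h1 : (NSet (bwcomp R) i₁ i₀ F π true true).Nonempty :=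
      nonempty_of_card_eq hcard hne0
    obtain ⟨a, ha⟩ := h1
    refine ⟨fun i => !(a i), (mem_iff true true _).mpr ?_⟩
    have h' : (fun i => !(!(a i))) = a := by funext i; simp
    rw [h']
    exact ha

/-- Case 4c: every tuple outside `R` is `false` at `j` and `true` at `m`. -/
lemma hasP_pinned {r : ℕ} (R : BoolRel r) (j m : Fin r) (t : Fin r → Bool)
    (ht : t ∉ R) (htj : t j = false) (htm : t m = true)
    (hallj : ∀ s, s ∉ R → s j = false) (hallm : ∀ s, s ∉ R → s m = true) : HasP R := by
  have hjm : m ≠ j := by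
    intro h
    rw [← h, htm] at htj
    exact absurd htj (by simp)
  have ht0R : (fun i => if i = m then false else t i) ∈ R := by
    by_contra hR
    have := hallm _ hR
    simp at this
  have ht1R : (fun i => if i = j then true else t i) ∈ R := by
    by_contra hR
    have := hallj _ hR
    simp at this
  refine ⟨m, j, ({m, j} : Finset (Fin r))ᶜ, t, hjm, by simp, by simp, ?_, ?_, ?_⟩
  · ext a
    simp only [NSet, Set.mem_setOf_eq, Set.mem_empty_iff_false, iff_false, not_and]
    intro haR ham haj hpin
    have : a = t := by
      funext i
      by_cases him : i = m
      · rw [him, ham, htm]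
      · by_cases hij : i = j
        · rw [hij, haj, htj]
        · exact hpin i (by simp [him, hij])
    rw [this] at haR
    exact ht haR
  · rw [card_singleton_set _ (fun i => if i = m then false else t i) ?h1,
      card_singleton_set _ (fun i => if i = j then true else t i) ?h2]
    case h1 =>
      ext a
      constructor
      · rintro ⟨haR, ham, haj, hpin⟩
        funext i
        by_cases him : i = m
        · simp [him, ham]
        · by_cases hij : i = j
          · rw [hij, haj]
            simp [hij ▸ him, htj]
          · rw [hpin i (by simp [him, hij])]
            simp [him]
      · rintro rfl
        refine ⟨ht0R, by simp, by simp [Ne.symm hjm, htj], fun i hi => ?_⟩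
        simp only [Finset.mem_compl, Finset.mem_insert, Finset.mem_singleton, not_or] at hi
        simp [hi.1]
    case h2 =>
      ext a
      constructor
      · rintro ⟨haR, ham, haj, hpin⟩
        funext i
        by_cases hij : i = j
        · simp [hij, haj]
        · by_cases him : i = m
          · rw [him, ham]
            simp [him ▸ hij, htm]
          · rw [hpin i (by simp [him, hij])]
            simp [hij]
      · rintro rfl
        refine ⟨ht1R, by simp [hjm, htm], by simp, fun i hi => ?_⟩
        simp only [Finset.mem_compl, Finset.mem_insert, Finset.mem_singleton, not_or] at hi
        simp [hi.2]
  · exact ⟨fun i => if i = m then false else t i,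
      ⟨ht0R, by simp, by simp [Ne.symm hjm, htj], fun i hi => by
        simp only [Finset.mem_compl, Finset.mem_insert, Finset.mem_singleton, not_or] at hi
        simp [hi.1]⟩⟩

end EqSim
namespace EqSim

/-- Restriction of a relation by pinning coordinate `j` to value `c`. -/
def restrictAt {r : ℕ} (R : BoolRel (r+1)) (j : Fin (r+1)) (c : Bool) : BoolRel r :=
  {a | j.insertNth c a ∈ R}

lemma insertNth_self {r : ℕ} (j : Fin (r+1)) (p : Fin (r+1) → Bool) :
    j.insertNth (p j) (fun i => p (j.succAbove i)) = p := by
  funext x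
  refine Fin.succAboveCases j ?_ ?_ x
  · simp
  · intro i; simp

lemma insertNth_const {r : ℕ} (j : Fin (r+1)) (c b : Bool) :
    j.insertNth c (fun _ => b) = fun i => if i = j then c else b := by
  funext x
  refine Fin.succAboveCases j ?_ ?_ x
  · simp
  · intro i
    simp [Fin.succAbove_ne j i]

/-- Transfer of `HasP` along restriction. -/
lemma hasP_of_restrict {r : ℕ} (R : BoolRel (r+1)) (j : Fin (r+1)) (c : Bool)
    (h : HasP (restrictAt R j c)) : HasP R := by
  obtain ⟨i₁, i₀, F, π, hne, h1F, h0F, hemp, hcard, hne0⟩ := h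
  set i₁' := j.succAbove i₁ with hi₁'
  set i₀' := j.succAbove i₀ with hi₀'
  set F' : Finset (Fin (r+1)) := insert j (F.map (j.succAboveEmb)) with hF'
  set π' : Fin (r+1) → Bool := j.insertNth c π with hπ'
  have hπ'j : π' j = c := by rw [hπ']; simp
  have hπ's : ∀ i : Fin r, π' (j.succAbove i) = π i := by intro i; rw [hπ']; simp
  have hmem' : ∀ i : Fin (r+1), i ∈ F' ↔ i = j ∨ ∃ i' ∈ F, j.succAbove i' = i := by
    intro i
    simp [hF', Fin.succAboveEmb]
  have fwd : ∀ (b₁ b₀ : Bool) (a : Fin (r+1) → Bool), a ∈ NSet R i₁' i₀' F' π' b₁ b₀ →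
      (fun i => a (j.succAbove i)) ∈ NSet (restrictAt R j c) i₁ i₀ F π b₁ b₀ := by
    rintro b₁ b₀ a ⟨haR, ha1, ha0, hpin⟩
    have haj : a j = c := by
      rw [hpin j ((hmem' j).mpr (Or.inl rfl)), hπ'j]
    refine ⟨?_, ha1, ha0, fun i hi => ?_⟩
    · show j.insertNth c (fun i => a (j.succAbove i)) ∈ R
      rw [← haj, insertNth_self]
      exact haR
    · show a (j.succAbove i) = π i
      rw [hpin _ ((hmem' _).mpr (Or.inr ⟨i, hi, rfl⟩)), hπ's]
  have bwd : ∀ (b₁ b₀ : Bool) (a' : Fin r → Bool),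
      a' ∈ NSet (restrictAt R j c) i₁ i₀ F π b₁ b₀ →
      (j.insertNth c a') ∈ NSet R i₁' i₀' F' π' b₁ b₀ := by
    rintro b₁ b₀ a' ⟨haR, ha1, ha0, hpin⟩
    refine ⟨haR, ?_, ?_, fun i hi => ?_⟩
    · rw [hi₁', Fin.insertNth_apply_succAbove]; exact ha1
    · rw [hi₀', Fin.insertNth_apply_succAbove]; exact ha0
    · rcases (hmem' i).mp hi with rfl | ⟨i', hi', rfl⟩
      · rw [hπ'j]; simp
      · rw [hπ's, Fin.insertNth_apply_succAbove]
        exact hpin i' hi'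
  have cardEq : ∀ (b₁ b₀ : Bool),
      Nat.card (NSet R i₁' i₀' F' π' b₁ b₀) =
      Nat.card (NSet (restrictAt R j c) i₁ i₀ F π b₁ b₀) := by
    intro b₁ b₀
    apply Nat.card_congr
    refine ⟨fun a => ⟨fun i => a.1 (j.succAbove i), fwd b₁ b₀ a.1 a.2⟩,
      fun a' => ⟨j.insertNth c a'.1, bwd b₁ b₀ a'.1 a'.2⟩, fun a => ?_, fun a' => ?_⟩
    · apply Subtype.ext
      show (j.insertNth c fun i => a.1 (j.succAbove i)) = a.1
      have haj : a.1 j = c := by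
        rw [a.2.2.2.2 j ((hmem' j).mpr (Or.inl rfl)), hπ'j]
      rw [← haj, insertNth_self]
    · apply Subtype.ext
      funext i
      exact Fin.insertNth_apply_succAbove (α := fun _ => Bool) j c a'.1 i
  refine ⟨i₁', i₀', F', π', ?_, ?_, ?_, ?_, ?_, ?_⟩
  · exact fun h => hne (Fin.succAbove_right_injective h)
  · rw [hmem']
    rintro (h | ⟨i', hi', h⟩)
    · exact Fin.succAbove_ne j i₁ h
    · exact h1F (Fin.succAbove_right_injective h ▸ hi')
  · rw [hmem']
    rintro (h | ⟨i', hi', h⟩)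
    · exact Fin.succAbove_ne j i₀ h
    · exact h0F (Fin.succAbove_right_injective h ▸ hi')
  · ext a
    simp only [Set.mem_empty_iff_false, iff_false]
    intro ha
    have := fwd true false a ha
    rw [hemp] at this
    exact this
  · rw [cardEq, cardEq, hcard]
  · obtain ⟨a', ha'⟩ := hne0
    exact ⟨j.insertNth c a', bwd false false a' ha'⟩

/-- Minimal-weight extraction when no unit vector lies in `R`. -/
lemma hasP_noUnit {r : ℕ} (R : BoolRel r) (h0 : (fun _ => false) ∈ R)
    (hnc : ∃ a ∈ R, (∃ i, a i = true) ∧ (∃ i, a i = false))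
    (hej : ¬ ∃ j, (fun i => if i = j then true else false) ∈ R) : HasP R := by
  set W : Set ℕ :=
    {n | ∃ a, a ∈ R ∧ ((∃ i, a i = true) ∧ (∃ i, a i = false)) ∧ wt a = n} with hWdef
  have hW : W.Nonempty := by
    obtain ⟨a, h1, h2⟩ := hnc
    exact ⟨wt a, a, h1, h2, rfl⟩
  obtain ⟨v, hvR, hvnc, hwt⟩ := Nat.sInf_mem hW
  have hmin : ∀ a ∈ R, ((∃ i, a i = true) ∧ (∃ i, a i = false)) → wt v ≤ wt a := by
    intro a haR hanc
    rw [hwt]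
    exact Nat.sInf_le ⟨a, haR, hanc, rfl⟩
  have hw0 : wt v ≠ 0 := by
    obtain ⟨i, hi⟩ := hvnc.1
    have : 0 < wt v := Finset.card_pos.mpr ⟨i, by simp [hi]⟩
    omega
  have hw1 : wt v ≠ 1 := by
    intro h
    obtain ⟨j, hj⟩ := Finset.card_eq_one.mp h
    apply hej
    refine ⟨j, ?_⟩
    have hv : v = fun i => if i = j then true else false := by
      funext i
      by_cases hij : i = j
      · subst hij
        have : i ∈ (Finset.univ.filter fun i => v i = true) := by
          rw [hj]; simp
        simp only [Finset.mem_filter] at this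
        simp [this.2]
      · have : i ∉ (Finset.univ.filter fun i => v i = true) := by
          rw [hj]; simp [hij]
        simp only [Finset.mem_filter, Finset.mem_univ, true_and] at this
        simp only [if_neg hij]
        exact Bool.not_eq_true _ ▸ (by simpa using this)
    rw [← hv]
    exact hvR
  exact hasP_of_min R h0 v hvR hvnc.1 hvnc.2 hmin (by omega)

/-- Glue: case analysis, with recursion provided as an oracle. -/
lemma hasP_glue {r : ℕ} (hr : 2 ≤ r) (R : BoolRel r)
    (h0 : (fun _ => false) ∈ R) (h1 : (fun _ => true) ∈ R) (hne : R ≠ Set.univ)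
    (hrec : ∀ (j : Fin r) (c : Bool), (fun i => if i = j then c else !c) ∈ R →
      (∃ t, t ∉ R ∧ t j = c) → HasP R) : HasP R := by
  by_cases hnc : ∃ a ∈ R, (∃ i, a i = true) ∧ (∃ i, a i = false)
  · by_cases hej : ∃ j, (fun i => if i = j then true else false) ∈ R
    · obtain ⟨j, hj⟩ := hej
      by_cases hT : ∃ t, t ∉ R ∧ t j = true
      · refine hrec j true ?_ hT
        have he : (fun i => if i = j then true else !true) =
            (fun i => if i = j then true else false) := by
          funext i; simp
        rw [he]; exact hj
      · push_neg at hT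
        by_cases hem : ∃ m, (fun i => if i = m then false else true) ∈ R
        · obtain ⟨m, hm⟩ := hem
          by_cases hS : ∃ s, s ∉ R ∧ s m = false
          · refine hrec m false ?_ hS
            have he : (fun i => if i = m then false else !false) =
                (fun i => if i = m then false else true) := by
              funext i; simp
            rw [he]; exact hm
          · push_neg at hS
            obtain ⟨t, ht⟩ := (Set.ne_univ_iff_exists_notMem _).mp hne
            have htj : t j = false := by
              have := hT t ht
              simpa using this
            have htm : t m = true := by
              have := hS t ht
              simpa using this
            refine hasP_pinned R j m t ht htj htm ?_ ?_
            · intro s hs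
              have := hT s hs
              simpa using this
            · intro s hs
              have := hS s hs
              simpa using this
        · -- dual minimal-weight case, via bitwise complement
          apply hasP_of_bwcomp
          have h0' : (fun _ => false) ∈ bwcomp R := by
            show (fun i => !((fun _ => false) i)) ∈ R
            simpa using h1
          have hnc' : ∃ a ∈ bwcomp R, (∃ i, a i = true) ∧ (∃ i, a i = false) := by
            obtain ⟨a, haR, ⟨it, hit⟩, ⟨jf, hjf⟩⟩ := hnc
            refine ⟨fun i => !(a i), ?_, ⟨jf, by simp [hjf]⟩, ⟨it, by simp [hit]⟩⟩
            show (fun i => !(!(a i))) ∈ R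
            simpa only [Bool.not_not] using haR
          have hej' : ¬ ∃ j, (fun i => if i = j then true else false) ∈ bwcomp R := by
            rintro ⟨m, hm⟩
            apply hem
            refine ⟨m, ?_⟩
            have hm' : (fun i => !(if i = m then true else false)) ∈ R := hm
            have : (fun i => !(if i = m then true else false)) =
                (fun i => if i = m then false else true) := by
              funext i
              by_cases h : i = m <;> simp [h]
            rwa [this] at hm'
          exact hasP_noUnit (bwcomp R) h0' hnc' hej'
    · exact hasP_noUnit R h0 hnc hej
  · apply hasP_of_allconst hr R h0 h1
    intro a haR
    by_cases hat : ∃ i, a i = true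
    · right
      funext i
      by_contra hai
      have hf : a i = false := by simpa using hai
      exact hnc ⟨a, haR, hat, ⟨i, hf⟩⟩
    · left
      push_neg at hat
      funext i
      simpa using hat i

/-- `HasP` holds for every 0-valid, 1-valid, incomplete relation of arity ≥ 2. -/
lemma hasP_all : ∀ (n : ℕ) (R : BoolRel (n+2)), (fun _ => false) ∈ R →
    (fun _ => true) ∈ R → R ≠ Set.univ → HasP R := by
  intro n
  induction n with
  | zero =>
    intro R h0 h1 hne
    refine hasP_glue (by omega) R h0 h1 hne ?_
    rintro j c hu ⟨t, htR, htj⟩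
    exfalso
    have hconst : (fun _ => c) ∈ R := by cases c <;> assumption
    have : t = fun i => if i = j then c else !c := by
      funext i
      by_cases hij : i = j
      · rw [hij, htj]; simp
      · simp only [if_neg hij]
        by_contra hne'
        have hti : t i = c := by
          cases hb : t i <;> cases c <;> simp_all
        have : t = fun _ => c := by
          funext x
          have hx2 : x = i ∨ x = j := by
            have hb1 := x.isLt
            have hb2 := i.isLt
            have hb3 := j.isLt
            have hb4 : i.val ≠ j.val := fun h => hij (Fin.ext h)
            have : x.val = i.val ∨ x.val = j.val := by omega
            rcases this with h | h
            · exact Or.inl (Fin.ext h)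
            · exact Or.inr (Fin.ext h)
          rcases hx2 with rfl | rfl
          · exact hti
          · exact htj
        rw [this] at htR
        exact htR hconst
    rw [this] at htR
    exact htR hu
  | succ n ih =>
    intro R h0 h1 hne
    refine hasP_glue (by omega) R h0 h1 hne ?_
    rintro j c hu ⟨t, htR, htj⟩
    apply hasP_of_restrict R j c
    apply ih
    · show j.insertNth c (fun _ => false) ∈ R
      rw [insertNth_const]
      cases c
      · simpa using h0
      · simpa using hu
    · show j.insertNth c (fun _ => true) ∈ R
      rw [insertNth_const]
      cases c
      · simpa using hu
      · simpa using h1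
    · intro hU
      apply htR
      have : (fun i => t (j.succAbove i)) ∈ restrictAt R j c := by
        rw [hU]; trivial
      have h' : j.insertNth c (fun i => t (j.succAbove i)) ∈ R := this
      rwa [← htj, insertNth_self] at h'

end EqSim
namespace EqSim

/-! ### The cyclic gadget instance -/

/-- Endpoint variable. -/
def XV {r : ℕ} (k : ℕ) (c : Fin k) : Fin (k + k*r) :=
  ⟨c.val, Nat.lt_of_lt_of_le c.isLt (Nat.le_add_right _ _)⟩

/-- Block (auxiliary) variable. -/
def BV {r : ℕ} (k : ℕ) (j : Fin k) (i : Fin r) : Fin (k + k*r) :=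
  ⟨k + (j.val * r + i.val), by
    have hi := i.isLt
    have h1 : j.val * r + i.val < (j.val + 1) * r := by
      rw [add_mul, one_mul]
      omega
    have h2 : (j.val + 1) * r ≤ k * r :=
      Nat.mul_le_mul_right r (Nat.succ_le_of_lt j.isLt)
    omega⟩

/-- Cyclic successor. -/
def nxt {k : ℕ} (j : Fin k) : Fin k := ⟨(j.val + 1) % k, Nat.mod_lt _ j.pos⟩

lemma XV_inj {r k : ℕ} {c c' : Fin k} (h : XV (r := r) k c = XV k c') : c = c' := by
  have hv : (XV (r := r) k c).val = (XV (r := r) k c').val := congrArg Fin.val h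
  exact Fin.val_injective hv

lemma XV_lt {r k : ℕ} (c : Fin k) : (XV (r := r) k c).val < k := c.isLt

lemma BV_ge {r k : ℕ} (j : Fin k) (i : Fin r) : k ≤ (BV k j i).val := Nat.le_add_right _ _

lemma XV_ne_BV {r k : ℕ} (c : Fin k) (j : Fin k) (i : Fin r) : XV k c ≠ BV k j i := by
  intro h
  have h1 := XV_lt (r := r) c
  have h2 := BV_ge j i
  rw [h] at h1
  omega

lemma BV_inj {r k : ℕ} {j j' : Fin k} {i i' : Fin r}
    (h : BV k j i = BV k j' i') : j = j' ∧ i = i' := by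
  have hv : k + (j.val * r + i.val) = k + (j'.val * r + i'.val) := congrArg Fin.val h
  have hi := i.isLt
  have hi' := i'.isLt
  have hjj : j.val = j'.val := by
    rcases Nat.lt_trichotomy j.val j'.val with hlt | heq | hgt
    · exfalso
      have hm : (j.val + 1) * r ≤ j'.val * r := Nat.mul_le_mul_right r hlt
      rw [add_mul, one_mul] at hm
      omega
    · exact heq
    · exfalso
      have hm : (j'.val + 1) * r ≤ j.val * r := Nat.mul_le_mul_right r hgt
      rw [add_mul, one_mul] at hm
      omega
  have hrr : j.val * r = j'.val * r := by rw [hjj]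
  exact ⟨Fin.val_injective hjj, Fin.val_injective (by omega)⟩

lemma nxt_ne {k : ℕ} (hk : 2 ≤ k) (j : Fin k) : nxt j ≠ j := by
  intro h
  have hv : (j.val + 1) % k = j.val := congrArg Fin.val h
  have hj := j.isLt
  rcases Nat.lt_or_ge (j.val + 1) k with h' | h'
  · rw [Nat.mod_eq_of_lt h'] at hv
    omega
  · have : j.val + 1 = k := by omega
    rw [this, Nat.mod_self] at hv
    omega

lemma nxt_inj {k : ℕ} : Function.Injective (nxt (k := k)) := by
  intro j j' h
  have hv : (j.val + 1) % k = (j'.val + 1) % k := congrArg Fin.val h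
  have hj := j.isLt
  have hj' := j'.isLt
  apply Fin.ext
  rcases Nat.lt_or_ge (j.val + 1) k with h1 | h1 <;>
    rcases Nat.lt_or_ge (j'.val + 1) k with h2 | h2
  · rw [Nat.mod_eq_of_lt h1, Nat.mod_eq_of_lt h2] at hv
    omega
  · have e2 : j'.val + 1 = k := by omega
    rw [Nat.mod_eq_of_lt h1, e2, Nat.mod_self] at hv
    omega
  · have e1 : j.val + 1 = k := by omega
    rw [e1, Nat.mod_self, Nat.mod_eq_of_lt h2] at hv
    omega
  · omega

/-- Decoding: constraint index of a block variable. -/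
def cOf {r k : ℕ} (hk : 0 < k) (v : Fin (k + k*r)) : Fin k :=
  ⟨(v.val - k) / r % k, Nat.mod_lt _ hk⟩

/-- Decoding: position of a block variable. -/
def pOf {r k : ℕ} (hr : 0 < r) (v : Fin (k + k*r)) : Fin r :=
  ⟨(v.val - k) % r, Nat.mod_lt _ hr⟩

lemma cOf_BV {r k : ℕ} (hk : 0 < k) (j : Fin k) (i : Fin r) :
    cOf hk (BV k j i) = j := by
  apply Fin.ext
  show ((k + (j.val * r + i.val)) - k) / r % k = j.val
  have h1 : (k + (j.val * r + i.val)) - k = j.val * r + i.val := by omega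
  have hi := i.isLt
  have hr0 : 0 < r := by omega
  rw [h1, mul_comm, Nat.mul_add_div hr0, Nat.div_eq_of_lt hi, Nat.add_zero,
    Nat.mod_eq_of_lt j.isLt]

lemma pOf_BV {r k : ℕ} (hr : 0 < r) (j : Fin k) (i : Fin r) :
    pOf hr (BV k j i) = i := by
  apply Fin.ext
  show ((k + (j.val * r + i.val)) - k) % r = i.val
  have h1 : (k + (j.val * r + i.val)) - k = j.val * r + i.val := by omega
  rw [h1, mul_comm, Nat.mul_add_mod, Nat.mod_eq_of_lt i.isLt]

lemma BV_decode {r k : ℕ} (hk : 0 < k) (hr : 0 < r) (v : Fin (k + k*r))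
    (hv : ¬ v.val < k) : BV k (cOf hk v) (pOf hr v) = v := by
  apply Fin.ext
  show k + ((v.val - k) / r % k * r + (v.val - k) % r) = v.val
  have hlt : v.val < k + k * r := v.isLt
  have hdiv : (v.val - k) / r < k := by
    rw [Nat.div_lt_iff_lt_mul hr]
    omega
  rw [Nat.mod_eq_of_lt hdiv]
  have hdm : (v.val - k) / r * r + (v.val - k) % r = v.val - k := by
    rw [mul_comm]
    exact Nat.div_add_mod _ _
  omega

end EqSim
namespace EqSim

/-- Scope of the `j`-th main constraint. -/
def scp {r : ℕ} (k : ℕ) (i₁ i₀ : Fin r) (j : Fin k) : Fin r → Fin (k + k*r) :=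
  fun i => if i = i₁ then XV k j else if i = i₀ then XV k (nxt j) else BV k j i

/-- The `j`-th main constraint. -/
def mainC {r : ℕ} (k : ℕ) (R : BoolRel r) (i₁ i₀ : Fin r) (j : Fin k) :
    Constraint (Fin (k + k*r)) := ⟨r, R, scp k i₁ i₀ j⟩

/-- Pin constraint for block variable `(j, i)`. -/
def pinC {r : ℕ} (k : ℕ) (π : Fin r → Bool) (j : Fin k) (i : Fin r) :
    Constraint (Fin (k + k*r)) :=
  ⟨1, if π i then Rone else Rzero, fun _ => BV k j i⟩

/-- The cyclic gadget instance. -/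
noncomputable def inst {r : ℕ} (k : ℕ) (R : BoolRel r) (i₁ i₀ : Fin r) (F : Finset (Fin r))
    (π : Fin r → Bool) : CSPInstance (Fin (k + k*r)) :=
  ⟨(List.finRange k).flatMap fun j =>
    mainC k R i₁ i₀ j :: F.toList.map (pinC k π j)⟩

lemma mem_inst_iff {r : ℕ} (k : ℕ) (R : BoolRel r) (i₁ i₀ : Fin r) (F : Finset (Fin r))
    (π : Fin r → Bool) (c : Constraint (Fin (k + k*r))) :
    c ∈ (inst k R i₁ i₀ F π).constraints ↔
      ∃ j : Fin k, c = mainC k R i₁ i₀ j ∨ ∃ i ∈ F, c = pinC k π j i := by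
  simp only [inst, List.mem_flatMap, List.mem_cons, List.mem_map, List.mem_finRange,
    true_and, Finset.mem_toList]
  constructor
  · rintro ⟨j, hj | ⟨i, hi, rfl⟩⟩
    · exact ⟨j, Or.inl hj⟩
    · exact ⟨j, Or.inr ⟨i, hi, rfl⟩⟩
  · rintro ⟨j, hj | ⟨i, hi, rfl⟩⟩
    · exact ⟨j, Or.inl hj⟩
    · exact ⟨j, Or.inr ⟨i, hi, rfl⟩⟩

lemma sat_pin_iff {r : ℕ} (k : ℕ) (π : Fin r → Bool) (j : Fin k) (i : Fin r)
    (σ : Fin (k + k*r) → Bool) :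
    (pinC k π j i).sat σ ↔ σ (BV k j i) = π i := by
  cases hπ : π i <;>
    simp [Constraint.sat, pinC, hπ, Rone, Rzero, Set.mem_setOf_eq] <;> exact Iff.rfl

lemma sat_inst_iff {r : ℕ} (k : ℕ) (R : BoolRel r) (i₁ i₀ : Fin r) (F : Finset (Fin r))
    (π : Fin r → Bool) (σ : Fin (k + k*r) → Bool) :
    (inst k R i₁ i₀ F π).sat σ ↔
      (∀ j : Fin k, (fun i => σ (scp k i₁ i₀ j i)) ∈ R) ∧
      (∀ j : Fin k, ∀ i ∈ F, σ (BV k j i) = π i) := by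
  constructor
  · intro h
    constructor
    · intro j
      exact h _ ((mem_inst_iff k R i₁ i₀ F π _).mpr ⟨j, Or.inl rfl⟩)
    · intro j i hi
      have := h _ ((mem_inst_iff k R i₁ i₀ F π _).mpr ⟨j, Or.inr ⟨i, hi, rfl⟩⟩)
      exact (sat_pin_iff k π j i σ).mp this
  · rintro ⟨hmain, hpin⟩ c hc
    rcases (mem_inst_iff k R i₁ i₀ F π c).mp hc with ⟨j, rfl | ⟨i, hi, rfl⟩⟩
    · exact hmain j
    · exact (sat_pin_iff k π j i σ).mpr (hpin j i hi)

/-- Cycle lemma: a non-constant assignment on the cycle has a descent edge. -/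
lemma cycle_descent {k : ℕ} (f : Fin k → Bool) (a b : Fin k)
    (ha : f a = true) (hb : f b = false) :
    ∃ j : Fin k, f j = true ∧ f (nxt j) = false := by
  by_contra hno
  push_neg at hno
  have hk : 0 < k := a.pos
  set g : ℕ → Bool := fun n => f ⟨n % k, Nat.mod_lt _ hk⟩ with hg
  have hstep : ∀ n, g n = true → g (n + 1) = true := by
    intro n hn
    have h1 : nxt (⟨n % k, Nat.mod_lt _ hk⟩ : Fin k) = ⟨(n+1) % k, Nat.mod_lt _ hk⟩ := by
      apply Fin.val_injective
      show (n % k + 1) % k = (n + 1) % k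
      exact Nat.mod_add_mod n k 1
    have h2 := hno ⟨n % k, Nat.mod_lt _ hk⟩ hn
    rw [h1] at h2
    show f ⟨(n+1) % k, Nat.mod_lt _ hk⟩ = true
    cases hc : f ⟨(n+1) % k, Nat.mod_lt _ hk⟩
    · exact absurd hc h2
    · rfl
  have hmono : ∀ m n, g n = true → g (n + m) = true := by
    intro m
    induction m with
    | zero => intro n h; exact h
    | succ m ih =>
      intro n h
      have := hstep (n + m) (ih n h)
      rwa [show n + (m+1) = n + m + 1 by omega]
  have hga : g a.val = true := by
    show f ⟨a.val % k, _⟩ = true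
    have : a.val % k = a.val := Nat.mod_eq_of_lt a.isLt
    rw [show (⟨a.val % k, Nat.mod_lt _ hk⟩ : Fin k) = a from Fin.val_injective this]
    exact ha
  have hgb : g (a.val + (k + b.val - a.val)) = true := hmono _ _ hga
  have hidx : a.val + (k + b.val - a.val) = k + b.val := by
    have := a.isLt
    omega
  rw [hidx] at hgb
  have : g (k + b.val) = false := by
    show f ⟨(k + b.val) % k, _⟩ = false
    have h1 : (k + b.val) % k = b.val := by
      rw [Nat.add_mod_left]
      exact Nat.mod_eq_of_lt b.isLt
    rw [show (⟨(k + b.val) % k, Nat.mod_lt _ hk⟩ : Fin k) = b from Fin.val_injective h1]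
    exact hb
  rw [hgb] at this
  exact absurd this (by simp)

end EqSim
namespace EqSim

lemma list_sum_flatMap {α : Type*} (l : List α) (f : α → List ℕ) :
    (l.flatMap f).sum = (l.map fun a => (f a).sum).sum := by
  induction l with
  | nil => rfl
  | cons h t ih => simp [ih]

lemma occ_pin {r k : ℕ} (π : Fin r → Bool) (j : Fin k) (i : Fin r) (v : Fin (k + k*r)) :
    (Finset.univ.filter fun p => (pinC k π j i).scope p = v).card =
      if BV k j i = v then 1 else 0 := by
  by_cases h : BV k j i = v
  · simp [pinC, h]
    exact Finset.card_fin 1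
  · simp only [pinC, if_neg h]
    rw [Finset.card_eq_zero]
    apply Finset.filter_false_of_mem
    intro _ _
    exact h

lemma varDegree_inst {r : ℕ} (k : ℕ) (R : BoolRel r) (i₁ i₀ : Fin r) (F : Finset (Fin r))
    (π : Fin r → Bool) (v : Fin (k + k*r)) :
    varDegree (inst k R i₁ i₀ F π) v =
      ∑ j : Fin k, ((Finset.univ.filter fun i => scp k i₁ i₀ j i = v).card
        + ∑ i ∈ F, (if BV k j i = v then 1 else 0)) := by
  show ((List.map _ ((List.finRange k).flatMap _)).sum) = _
  rw [List.map_flatMap, list_sum_flatMap, ← Fin.sum_univ_def]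
  apply Finset.sum_congr rfl
  intro j _
  show (List.map _ (mainC k R i₁ i₀ j :: F.toList.map (pinC k π j))).sum = _
  rw [List.map_cons, List.sum_cons, List.map_map, Finset.sum_map_toList]
  congr 1
  exact Finset.sum_congr rfl (fun i _ => occ_pin π j i v)

lemma occ_main_X {r k : ℕ} (hk : 2 ≤ k) (i₁ i₀ : Fin r) (hne : i₁ ≠ i₀) (j c : Fin k) :
    (Finset.univ.filter fun i => scp k i₁ i₀ j i = XV k c).card =
      (if j = c then 1 else 0) + (if nxt j = c then 1 else 0) := by
  by_cases h1 : j = c <;> by_cases h2 : nxt j = c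
  · exact absurd (h2.trans h1.symm) (nxt_ne hk j)
  · rw [if_pos h1, if_neg h2]
    have : (Finset.univ.filter fun i => scp k i₁ i₀ j i = XV k c) = {i₁} := by
      ext i
      simp only [Finset.mem_filter, Finset.mem_univ, true_and, Finset.mem_singleton]
      constructor
      · intro h
        by_cases hi1 : i = i₁
        · exact hi1
        · exfalso
          by_cases hi0 : i = i₀
          · rw [scp, if_neg hi1, if_pos hi0] at h
            exact h2 (XV_inj h)
          · rw [scp, if_neg hi1, if_neg hi0] at h
            exact XV_ne_BV c j i h.symm
      · rintro rfl
        rw [scp, if_pos rfl, h1]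
    rw [this, Finset.card_singleton]
  · rw [if_neg h1, if_pos h2]
    have : (Finset.univ.filter fun i => scp k i₁ i₀ j i = XV k c) = {i₀} := by
      ext i
      simp only [Finset.mem_filter, Finset.mem_univ, true_and, Finset.mem_singleton]
      constructor
      · intro h
        by_cases hi0 : i = i₀
        · exact hi0
        · exfalso
          by_cases hi1 : i = i₁
          · rw [scp, if_pos hi1] at h
            exact h1 (XV_inj h)
          · rw [scp, if_neg hi1, if_neg hi0] at h
            exact XV_ne_BV c j i h.symm
      · rintro rfl
        rw [scp, if_neg (Ne.symm hne), if_pos rfl, h2]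
    rw [this, Finset.card_singleton]
  · rw [if_neg h1, if_neg h2]
    rw [Finset.card_eq_zero]
    apply Finset.filter_false_of_mem
    intro i _
    intro h
    by_cases hi1 : i = i₁
    · rw [scp, if_pos hi1] at h
      exact h1 (XV_inj h)
    · by_cases hi0 : i = i₀
      · rw [scp, if_neg hi1, if_pos hi0] at h
        exact h2 (XV_inj h)
      · rw [scp, if_neg hi1, if_neg hi0] at h
        exact XV_ne_BV c j i h.symm

lemma occ_main_B {r k : ℕ} (i₁ i₀ : Fin r) (j c : Fin k) (p : Fin r) :
    (Finset.univ.filter fun i => scp k i₁ i₀ j i = BV k c p).card ≤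
      if j = c then 1 else 0 := by
  by_cases hj : j = c
  · rw [if_pos hj]
    have hsub : (Finset.univ.filter fun i => scp k i₁ i₀ j i = BV k c p) ⊆ {p} := by
      intro i hi
      simp only [Finset.mem_filter, Finset.mem_univ, true_and] at hi
      simp only [Finset.mem_singleton]
      by_cases hi1 : i = i₁
      · rw [scp, if_pos hi1] at hi
        exact absurd hi (XV_ne_BV j c p)
      · by_cases hi0 : i = i₀
        · rw [scp, if_neg hi1, if_pos hi0] at hi
          exact absurd hi (XV_ne_BV (nxt j) c p)
        · rw [scp, if_neg hi1, if_neg hi0] at hi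
          exact (BV_inj hi).2
    calc (Finset.univ.filter fun i => scp k i₁ i₀ j i = BV k c p).card
        ≤ ({p} : Finset (Fin r)).card := Finset.card_le_card hsub
      _ = 1 := Finset.card_singleton p
  · rw [if_neg hj, Nat.le_zero, Finset.card_eq_zero]
    apply Finset.filter_false_of_mem
    intro i _
    intro h
    by_cases hi1 : i = i₁
    · rw [scp, if_pos hi1] at h
      exact XV_ne_BV j c p h
    · by_cases hi0 : i = i₀
      · rw [scp, if_neg hi1, if_pos hi0] at h
        exact XV_ne_BV (nxt j) c p h
      · rw [scp, if_neg hi1, if_neg hi0] at h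
        exact hj (BV_inj h).1

lemma deg_X {r : ℕ} (k : ℕ) (hk : 2 ≤ k) (R : BoolRel r) (i₁ i₀ : Fin r) (hne : i₁ ≠ i₀)
    (F : Finset (Fin r)) (π : Fin r → Bool) (c : Fin k) :
    varDegree (inst k R i₁ i₀ F π) (XV k c) = 2 := by
  rw [varDegree_inst]
  have hterm : ∀ j : Fin k,
      ((Finset.univ.filter fun i => scp k i₁ i₀ j i = XV k c).card
        + ∑ i ∈ F, (if BV k j i = XV k c then 1 else 0)) =
      ((if j = c then 1 else 0) + (if nxt j = c then 1 else 0)) := by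
    intro j
    rw [occ_main_X hk i₁ i₀ hne j c]
    have : ∑ i ∈ F, (if BV k j i = XV k c then 1 else 0) = 0 := by
      apply Finset.sum_eq_zero
      intro i _
      rw [if_neg (fun h => XV_ne_BV c j i h.symm)]
    omega
  rw [Finset.sum_congr rfl (fun j _ => hterm j), Finset.sum_add_distrib]
  have h1 : ∑ j : Fin k, (if j = c then 1 else 0) = 1 := by
    rw [Finset.sum_ite_eq' Finset.univ c (fun _ => 1)]
    simp
  have h2 : ∑ j : Fin k, (if nxt j = c then 1 else 0) = 1 := by
    have hbij : Function.Bijective (nxt (k := k)) :=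
      Finite.injective_iff_bijective.mp nxt_inj
    rw [Fintype.sum_bijective nxt hbij _ (fun j => if j = c then 1 else 0) (fun j => rfl)]
    exact h1
  omega

lemma deg_B {r : ℕ} (k : ℕ) (R : BoolRel r) (i₁ i₀ : Fin r)
    (F : Finset (Fin r)) (π : Fin r → Bool) (c : Fin k) (p : Fin r) :
    varDegree (inst k R i₁ i₀ F π) (BV k c p) ≤ 2 := by
  rw [varDegree_inst]
  have hterm : ∀ j : Fin k,
      ((Finset.univ.filter fun i => scp k i₁ i₀ j i = BV k c p).card
        + ∑ i ∈ F, (if BV k j i = BV k c p then 1 else 0)) ≤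
      ((if j = c then 1 else 0) + (if j = c then 1 else 0)) := by
    intro j
    have h1 := occ_main_B i₁ i₀ j c p
    have h2 : ∑ i ∈ F, (if BV k j i = BV k c p then 1 else 0) ≤
        if j = c then 1 else 0 := by
      by_cases hj : j = c
      · subst hj
        have heach : ∀ i ∈ F, (if BV k j i = BV k j p then 1 else 0) =
            if i = p then 1 else 0 := by
          intro i _
          by_cases hip : i = p
          · rw [if_pos hip, if_pos (by rw [hip])]
          · rw [if_neg hip, if_neg (fun h => hip (BV_inj h).2)]
        rw [Finset.sum_congr rfl heach, Finset.sum_ite_eq' F p (fun _ => 1)]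
        by_cases hp : p ∈ F <;> simp [hp]
      · rw [if_neg hj]
        rw [Nat.le_zero]
        apply Finset.sum_eq_zero
        intro i _
        rw [if_neg (fun h => hj (BV_inj h).1)]
    omega
  calc (∑ j : Fin k, ((Finset.univ.filter fun i => scp k i₁ i₀ j i = BV k c p).card
        + ∑ i ∈ F, (if BV k j i = BV k c p then 1 else 0)))
      ≤ ∑ j : Fin k, ((if j = c then 1 else 0) + (if j = c then 1 else 0)) :=
        Finset.sum_le_sum (fun j _ => hterm j)
    _ = 2 := by
        rw [Finset.sum_add_distrib]
        have h1 : ∑ j : Fin k, (if j = c then 1 else 0) = 1 := by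
          rw [Finset.sum_ite_eq' Finset.univ c (fun _ => 1)]
          simp
        omega

/-- Degree bound for all variables. -/
lemma deg_all {r : ℕ} (k : ℕ) (hk : 2 ≤ k) (hr : 0 < r) (R : BoolRel r) (i₁ i₀ : Fin r)
    (hne : i₁ ≠ i₀) (F : Finset (Fin r)) (π : Fin r → Bool) (v : Fin (k + k*r)) :
    varDegree (inst k R i₁ i₀ F π) v ≤ 3 := by
  by_cases hv : v.val < k
  · have hx : v = XV k ⟨v.val, hv⟩ := Fin.val_injective rfl
    rw [hx, deg_X k hk R i₁ i₀ hne F π]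
    omega
  · have : v = BV k (cOf (by omega) v) (pOf hr v) := (BV_decode (by omega) hr v hv).symm
    rw [this]
    have := deg_B k R i₁ i₀ F π (cOf (by omega) v) (pOf hr v)
    omega

end EqSim
namespace EqSim

/-- Tuple with both ports overwritten by `b`. -/
def tau {r : ℕ} (i₁ i₀ : Fin r) (b : Bool) (β : Fin r → Bool) : Fin r → Bool :=
  fun i => if i = i₁ then b else if i = i₀ then b else β i

/-- Per-constraint completion set. -/
def DSet {r : ℕ} (R : BoolRel r) (i₁ i₀ : Fin r) (F : Finset (Fin r)) (π : Fin r → Bool)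
    (b : Bool) : Set (Fin r → Bool) :=
  {β | tau i₁ i₀ b β ∈ R ∧ ∀ i ∈ F, β i = π i}

/-- Solution set with all endpoints equal to `b`. -/
def SSet {r : ℕ} (k : ℕ) (R : BoolRel r) (i₁ i₀ : Fin r) (F : Finset (Fin r))
    (π : Fin r → Bool) (b : Bool) : Set (Fin (k + k*r) → Bool) :=
  {σ | (inst k R i₁ i₀ F π).sat σ ∧ ∀ v : Fin (k + k*r), (v:ℕ) < k → σ v = b}

section Count

variable {r : ℕ} (k : ℕ) (R : BoolRel r) (i₁ i₀ : Fin r) (F : Finset (Fin r))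
  (π : Fin r → Bool)

/-- The solutions with constant endpoints decompose as independent block choices. -/
noncomputable def solEquiv (hk : 0 < k) (hr : 0 < r) (b : Bool) :
    SSet k R i₁ i₀ F π b ≃ (Fin k → DSet R i₁ i₀ F π b) := by
  refine
    { toFun := fun σ j => ⟨fun i => σ.1 (BV k j i), ?_, ?_⟩
      invFun := fun d => ⟨fun v => if h : v.val < k then b
          else (d (cOf hk v)).1 (pOf hr v), ?_, ?_⟩
      left_inv := ?_
      right_inv := ?_ }
  · -- tau ∈ R
    have hmain := ((sat_inst_iff k R i₁ i₀ F π σ.1).mp σ.2.1).1 j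
    have heq : tau i₁ i₀ b (fun i => σ.1 (BV k j i)) = fun i => σ.1 (scp k i₁ i₀ j i) := by
      funext i
      by_cases hi1 : i = i₁
      · rw [tau, if_pos hi1, scp, if_pos hi1]
        exact (σ.2.2 (XV k j) (XV_lt j)).symm
      · by_cases hi0 : i = i₀
        · rw [tau, if_neg hi1, if_pos hi0, scp, if_neg hi1, if_pos hi0]
          exact (σ.2.2 (XV k (nxt j)) (XV_lt (nxt j))).symm
        · rw [tau, if_neg hi1, if_neg hi0, scp, if_neg hi1, if_neg hi0]
    rw [heq]
    exact hmain
  · -- pins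
    intro i hi
    exact ((sat_inst_iff k R i₁ i₀ F π σ.1).mp σ.2.1).2 j i hi
  · -- invFun sat
    apply (sat_inst_iff k R i₁ i₀ F π _).mpr
    constructor
    · intro j
      have heq : (fun i => (fun v => if h : v.val < k then b
          else (d (cOf hk v)).1 (pOf hr v)) (scp k i₁ i₀ j i)) = tau i₁ i₀ b (d j).1 := by
        funext i
        by_cases hi1 : i = i₁
        · rw [scp, if_pos hi1, tau, if_pos hi1]
          exact dif_pos (XV_lt j)
        · by_cases hi0 : i = i₀
          · rw [scp, if_neg hi1, if_pos hi0, tau, if_neg hi1, if_pos hi0]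
            exact dif_pos (XV_lt (nxt j))
          · rw [scp, if_neg hi1, if_neg hi0, tau, if_neg hi1, if_neg hi0]
            show (if h : (BV k j i).val < k then b
                else (d (cOf hk (BV k j i))).1 (pOf hr (BV k j i))) = (d j).1 i
            have hge := BV_ge (r := r) (k := k) j i
            rw [dif_neg (by omega), cOf_BV hk j i, pOf_BV hr j i]
      rw [heq]
      exact (d j).2.1
    · intro j i hi
      have hge := BV_ge (r := r) (k := k) j i
      show (if h : (BV k j i).val < k then b
          else (d (cOf hk (BV k j i))).1 (pOf hr (BV k j i))) = π i
      rw [dif_neg (by omega), cOf_BV hk j i, pOf_BV hr j i]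
      exact (d j).2.2 i hi
  · -- endpoints
    intro v hv
    exact dif_pos hv
  · -- left_inv
    intro σ
    apply Subtype.ext
    funext v
    by_cases hv : v.val < k
    · show (if h : v.val < k then b else _) = σ.1 v
      rw [dif_pos hv]
      exact (σ.2.2 v hv).symm
    · show (if h : v.val < k then b else σ.1 (BV k (cOf hk v) (pOf hr v))) = σ.1 v
      rw [dif_neg hv, BV_decode hk hr v hv]
  · -- right_inv
    intro d
    funext j
    apply Subtype.ext
    funext i
    show (if h : (BV k j i).val < k then b
        else (d (cOf hk (BV k j i))).1 (pOf hr (BV k j i))) = (d j).1 i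
    have hge := BV_ge (r := r) (k := k) j i
    rw [dif_neg (by omega), cOf_BV hk j i, pOf_BV hr j i]

/-- The per-constraint completion set decomposes via the witness sets. -/
noncomputable def dEquiv (hne : i₁ ≠ i₀) (h1F : i₁ ∉ F) (h0F : i₀ ∉ F) (b : Bool) :
    DSet R i₁ i₀ F π b ≃ (NSet R i₁ i₀ F π b b) × Bool × Bool := by
  refine
    { toFun := fun β => (⟨tau i₁ i₀ b β.1, β.2.1, by rw [tau, if_pos rfl],
        by rw [tau, if_neg (Ne.symm hne), if_pos rfl], fun i hi => ?_⟩, β.1 i₁, β.1 i₀)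
      invFun := fun a => ⟨fun i => if i = i₁ then a.2.1 else if i = i₀ then a.2.2
          else a.1.1 i, ?_, ?_⟩
      left_inv := ?_
      right_inv := ?_ }
  · rw [tau, if_neg (fun h : _ = i₁ => h1F (h ▸ hi)), if_neg (fun h : _ = i₀ => h0F (h ▸ hi))]
    exact β.2.2 i hi
  · have heq : tau i₁ i₀ b (fun i => if i = i₁ then a.2.1 else if i = i₀ then a.2.2
        else a.1.1 i) = a.1.1 := by
      funext i
      by_cases hi1 : i = i₁
      · rw [tau, if_pos hi1, hi1]
        exact a.1.2.2.1.symm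
      · by_cases hi0 : i = i₀
        · rw [tau, if_neg hi1, if_pos hi0, hi0]
          exact a.1.2.2.2.1.symm
        · rw [tau, if_neg hi1, if_neg hi0, if_neg hi1, if_neg hi0]
    rw [heq]
    exact a.1.2.1
  · intro i hi
    show (if i = i₁ then a.2.1 else if i = i₀ then a.2.2 else a.1.1 i) = π i
    rw [if_neg (fun h : _ = i₁ => h1F (h ▸ hi)), if_neg (fun h : _ = i₀ => h0F (h ▸ hi))]
    exact a.1.2.2.2.2 i hi
  · intro β
    apply Subtype.ext
    funext i
    show (if i = i₁ then β.1 i₁ else if i = i₀ then β.1 i₀ else tau i₁ i₀ b β.1 i) = β.1 i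
    by_cases hi1 : i = i₁
    · rw [if_pos hi1, hi1]
    · by_cases hi0 : i = i₀
      · rw [if_neg hi1, if_pos hi0, hi0]
      · rw [if_neg hi1, if_neg hi0, tau, if_neg hi1, if_neg hi0]
  · intro a
    refine Prod.ext ?_ (Prod.ext ?_ ?_)
    · apply Subtype.ext
      funext i
      show tau i₁ i₀ b (fun i => if i = i₁ then a.2.1 else if i = i₀ then a.2.2
          else a.1.1 i) i = a.1.1 i
      by_cases hi1 : i = i₁
      · rw [tau, if_pos hi1, hi1]
        exact a.1.2.2.1.symm
      · by_cases hi0 : i = i₀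
        · rw [tau, if_neg hi1, if_pos hi0, hi0]
          exact a.1.2.2.2.1.symm
        · rw [tau, if_neg hi1, if_neg hi0]
          show (if i = i₁ then a.2.1 else if i = i₀ then a.2.2 else a.1.1 i) = a.1.1 i
          rw [if_neg hi1, if_neg hi0]
    · show (if i₁ = i₁ then a.2.1 else if i₁ = i₀ then a.2.2 else a.1.1 i₁) = a.2.1
      rw [if_pos rfl]
    · show (if i₀ = i₁ then a.2.1 else if i₀ = i₀ then a.2.2 else a.1.1 i₀) = a.2.2
      rw [if_neg (Ne.symm hne), if_pos rfl]

lemma card_SSet (hk : 0 < k) (hr : 0 < r) (hne : i₁ ≠ i₀) (h1F : i₁ ∉ F) (h0F : i₀ ∉ F)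
    (b : Bool) :
    Nat.card (SSet k R i₁ i₀ F π b) =
      (Nat.card (NSet R i₁ i₀ F π b b) * 4) ^ k := by
  rw [Nat.card_congr (solEquiv k R i₁ i₀ F π hk hr b), Nat.card_pi]
  have hD : Nat.card (DSet R i₁ i₀ F π b) = Nat.card (NSet R i₁ i₀ F π b b) * 4 := by
    rw [Nat.card_congr (dEquiv R i₁ i₀ F π hne h1F h0F b), Nat.card_prod, Nat.card_prod]
    simp [Nat.card_eq_fintype_card]
  rw [Finset.prod_congr rfl (fun j _ => hD), Finset.prod_const, Finset.card_univ,
    Fintype.card_fin]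

/-- Non-constant endpoint assignments are unsatisfiable. -/
lemma no_mixed (hne : i₁ ≠ i₀) (h1F : i₁ ∉ F) (h0F : i₀ ∉ F)
    (hemp : NSet R i₁ i₀ F π true false = ∅)
    (σ : Fin (k + k*r) → Bool) (hsat : (inst k R i₁ i₀ F π).sat σ) :
    (∀ v : Fin (k + k*r), (v:ℕ) < k → σ v = false) ∨
    (∀ v : Fin (k + k*r), (v:ℕ) < k → σ v = true) := by
  have hs := (sat_inst_iff k R i₁ i₀ F π σ).mp hsat
  by_cases h1 : ∃ c : Fin k, σ (XV k c) = true
  · by_cases h0 : ∃ c : Fin k, σ (XV k c) = false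
    · exfalso
      obtain ⟨a, ha⟩ := h1
      obtain ⟨b', hb⟩ := h0
      obtain ⟨j, hjt, hjf⟩ := cycle_descent (fun c => σ (XV k c)) a b' ha hb
      have hmem : (fun i => σ (scp k i₁ i₀ j i)) ∈ NSet R i₁ i₀ F π true false := by
        refine ⟨hs.1 j, ?_, ?_, fun i hi => ?_⟩
        · show σ (scp k i₁ i₀ j i₁) = true
          rw [scp, if_pos rfl]
          exact hjt
        · show σ (scp k i₁ i₀ j i₀) = false
          rw [scp, if_neg (Ne.symm hne), if_pos rfl]
          exact hjf
        · show σ (scp k i₁ i₀ j i) = π i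
          rw [scp, if_neg (fun h : _ = i₁ => h1F (h ▸ hi)), if_neg (fun h : _ = i₀ => h0F (h ▸ hi))]
          exact hs.2 j i hi
      rw [hemp] at hmem
      exact hmem
    · right
      push_neg at h0
      intro v hv
      have hx : v = XV k ⟨v.val, hv⟩ := Fin.val_injective rfl
      rw [hx]
      cases hc : σ (XV k ⟨v.val, hv⟩)
      · exact absurd hc (h0 ⟨v.val, hv⟩)
      · rfl
  · left
    push_neg at h1
    intro v hv
    have hx : v = XV k ⟨v.val, hv⟩ := Fin.val_injective rfl
    rw [hx]
    cases hc : σ (XV k ⟨v.val, hv⟩)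
    · rfl
    · exact absurd hc (h1 ⟨v.val, hv⟩)

end Count

end EqSim
namespace EqSim

theorem simulates_of_hasP {r : ℕ} (R : BoolRel r) (hP : HasP R) :
    relSimulatesEq R 3 := by
  obtain ⟨i₁, i₀, F, π, hne, h1F, h0F, hemp, hcard, hne0⟩ := hP
  intro k hk
  have hr : 0 < r := i₁.pos
  have hk0 : 0 < k := by omega
  refine ⟨k + k*r, Nat.le_add_right _ _, inst k R i₁ i₀ F π, ?_, ?_, ?_, ?_⟩
  · -- language
    intro c hc
    rcases (mem_inst_iff k R i₁ i₀ F π c).mp hc with ⟨j, rfl | ⟨i, hi, rfl⟩⟩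
    · exact Or.inl rfl
    · right
      show (⟨1, if π i then Rone else Rzero⟩ : Σ r, BoolRel r) ∈ pinLang
      cases hπ : π i <;> simp [pinLang, hπ]
  · -- degree bound
    intro v
    exact deg_all k hk hr R i₁ i₀ hne F π v
  · -- endpoint degree bound
    intro v hv
    have hx : v = XV k ⟨v.val, hv⟩ := Fin.val_injective rfl
    rw [hx, deg_X k hk R i₁ i₀ hne F π]
  · refine ⟨(Nat.card (NSet R i₁ i₀ F π false false) * 4) ^ k, ?_, ?_, ?_, ?_⟩
    · have hpos : 0 < Nat.card (NSet R i₁ i₀ F π false false) := by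
        haveI := hne0.to_subtype
        exact Nat.card_pos
      exact Nat.one_le_pow _ _ (by omega)
    · exact card_SSet k R i₁ i₀ F π hk0 hr hne h1F h0F false
    · have h := card_SSet k R i₁ i₀ F π hk0 hr hne h1F h0F true
      rw [← hcard] at h
      exact h
    · intro σ hsat
      exact no_mixed k R i₁ i₀ F π hne h1F h0F hemp σ hsat

end EqSim

/-- If `r ≥ 2` and `R ⊆ {0,1}^r` is 0-valid and 1-valid but not complete,
then `R` 3-simulates equality. -/
theorem simulates_equality_of_valid_not_complete (r : ℕ) (hr : 2 ≤ r) (R : BoolRel r)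
    (h0 : (fun _ => false) ∈ R) (h1 : (fun _ => true) ∈ R) (hne : R ≠ Set.univ) :
    relSimulatesEq R 3 := by
  obtain ⟨n, rfl⟩ : ∃ n, r = n + 2 := ⟨r - 2, by omega⟩
  exact EqSim.simulates_of_hasP R (EqSim.hasP_all n R h0 h1 hne)
end
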